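/- arXiv:2304.14263 — 5 statements merged into one kernel-verified Lean document; each statement's English description precedes it below -/
import Mathlib

section
/- Fix an integer m ≥ 1. Let f : ℝ → ℂ be smooth, compactly supported, with supp f ⊆ (-∞, 0), and set f̂(ζ) := (2π)^{-1/2} ∫_ℝ f(x) e^{-iζx} dx for ζ ∈ ℂ. Let G : (0, ∞) → ℂ be measurable with ∫_0^{∞} |G(p)|² p^{m-1} dp < ∞. Then the function F(z) := ∫_0^{∞} conj(G(p)) · e^{-πmz} · f̂(e^{-2πz} p) · p^{m-1} dp is well defined for every z ∈ S̄ (the integrand is absolutely integrable on (0, ∞)), F is continuous on S̄, and F is holomorphic on S. -/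
open MeasureTheory Real Set Complex

noncomputable def texp (ζ : ℂ) (x : ℝ) : ℂ := Complex.exp (-(Complex.I * ζ * x))

lemma texp_continuous (ζ : ℂ) : Continuous (texp ζ) := by
  unfold texp
  fun_prop

lemma texp_contDiff (ζ : ℂ) : ContDiff ℝ (⊤ : ℕ∞) (texp ζ) := by
  unfold texp
  apply ContDiff.cexp
  exact (ContDiff.mul contDiff_const Complex.ofRealCLM.contDiff).neg

lemma norm_texp (ζ : ℂ) (x : ℝ) : ‖texp ζ x‖ = Real.exp (ζ.im * x) := by
  unfold texp
  rw [Complex.norm_exp]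
  congr 1
  simp [Complex.mul_re]

lemma integrable_mul_texp {g : ℝ → ℂ} (hg : Continuous g) (hgc : HasCompactSupport g) (ζ : ℂ) :
    Integrable (fun x : ℝ => g x * texp ζ x) :=
  (hg.mul (texp_continuous ζ)).integrable_of_hasCompactSupport (hgc.mul_right)

lemma norm_mul_texp_le {g : ℝ → ℂ} (hsupp : tsupport g ⊆ Set.Iio 0) {ζ : ℂ} (hζ : 0 ≤ ζ.im)
    (x : ℝ) : ‖g x * texp ζ x‖ ≤ ‖g x‖ := by
  by_cases hx : g x = 0
  · simp [hx]
  · have hx0 : x < 0 := hsupp (subset_tsupport g hx)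
    rw [norm_mul, norm_texp]
    nth_rewrite 2 [← mul_one ‖g x‖]
    gcongr
    rw [← Real.exp_zero]
    exact Real.exp_le_exp.2 (mul_nonpos_of_nonneg_of_nonpos hζ hx0.le)

lemma texp_hasDerivAt (ζ : ℂ) (x : ℝ) :
    HasDerivAt (texp ζ) (-(Complex.I * ζ) * texp ζ x) x := by
  have h1 : HasDerivAt (fun x : ℝ => -(Complex.I * ζ * x)) (-(Complex.I * ζ)) x := by
    have h := ((Complex.ofRealCLM.hasDerivAt (x := x)).const_mul (Complex.I * ζ)).neg
    simp only [Complex.ofRealCLM_apply, Complex.ofReal_one, mul_one] at h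
    exact h
  have := h1.cexp
  rw [show -(Complex.I * ζ) * texp ζ x = Complex.exp (-(Complex.I * ζ * x)) * -(Complex.I * ζ) by rw [texp]; ring]
  exact this

lemma ibp {g : ℝ → ℂ} (hg : ContDiff ℝ (⊤ : ℕ∞) g) (hgc : HasCompactSupport g) (ζ : ℂ) :
    ∫ x : ℝ, deriv g x * texp ζ x = (Complex.I * ζ) * ∫ x : ℝ, g x * texp ζ x := by
  have hgd : Differentiable ℝ g := hg.differentiable (by simp)
  set u : ℝ → ℂ := fun x => g x * texp ζ x with hu_def
  have hu_deriv : ∀ x : ℝ, HasDerivAt u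
      (deriv g x * texp ζ x + g x * (-(Complex.I * ζ) * texp ζ x)) x := fun x =>
    ((hgd x).hasDerivAt).mul (texp_hasDerivAt ζ x)
  have huc : HasCompactSupport u := hgc.mul_right
  have hu1 : ContDiff ℝ 1 u := (hg.of_le (by exact_mod_cast le_top)).mul
    ((texp_contDiff ζ).of_le (by exact_mod_cast le_top))
  have hderiv_cont : Continuous (deriv g) := (contDiff_infty_iff_deriv.1 hg).2.continuous
  have hint1 : Integrable (fun x : ℝ => deriv g x * texp ζ x) :=
    integrable_mul_texp hderiv_cont hgc.deriv ζ
  have hint2 : Integrable (fun x : ℝ => g x * (-(Complex.I * ζ) * texp ζ x)) := by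
    have := (integrable_mul_texp hgd.continuous hgc ζ).const_mul (-(Complex.I * ζ))
    apply this.congr
    filter_upwards with x
    ring
  have hderivu : ∀ x, deriv u x = deriv g x * texp ζ x + g x * (-(Complex.I * ζ) * texp ζ x) :=
    fun x => (hu_deriv x).deriv
  have hzero : ∫ x : ℝ, deriv u x = 0 := by
    have hintd : Integrable (deriv u) := by
      apply (hint1.add hint2).congr
      filter_upwards with x
      simp [hderivu x]
    rw [← intervalIntegral.integral_Iic_add_Ioi (hintd.integrableOn) (hintd.integrableOn),
      HasCompactSupport.integral_Iic_deriv_eq hu1 huc 0,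
      HasCompactSupport.integral_Ioi_deriv_eq hu1 huc 0]
    ring
  have hsplit : ∫ x : ℝ, deriv u x =
      (∫ x : ℝ, deriv g x * texp ζ x) + (-(Complex.I * ζ)) * ∫ x : ℝ, g x * texp ζ x := by
    rw [show (fun x => deriv u x) = fun x =>
      deriv g x * texp ζ x + g x * (-(Complex.I * ζ) * texp ζ x) from funext hderivu]
    rw [integral_add hint1 hint2, ← MeasureTheory.integral_const_mul]
    congr 1
    apply integral_congr_ae
    filter_upwards with x
    ring
  rw [hsplit] at hzero
  linear_combination hzero

lemma decay (k : ℕ) : ∀ (g : ℝ → ℂ), ContDiff ℝ (⊤ : ℕ∞) g → HasCompactSupport g →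
    tsupport g ⊆ Set.Iio 0 → ∃ C : ℝ, 0 ≤ C ∧ ∀ ζ : ℂ, 0 ≤ ζ.im →
      ‖ζ‖ ^ k * ‖∫ x : ℝ, g x * texp ζ x‖ ≤ C := by
  induction k with
  | zero =>
    intro g hg hgc hsupp
    refine ⟨∫ x : ℝ, ‖g x‖, integral_nonneg fun x => norm_nonneg _, fun ζ hζ => ?_⟩
    simpa using norm_integral_le_of_norm_le
      ((integrable_mul_texp (hg.continuous) hgc 0).norm.congr (by
        filter_upwards with x; simp [texp]))
      (Filter.Eventually.of_forall (norm_mul_texp_le hsupp hζ))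
  | succ k ih =>
    intro g hg hgc hsupp
    obtain ⟨C, hC0, hC⟩ := ih (deriv g) (contDiff_infty_iff_deriv.1 hg).2 hgc.deriv
      ((closure_minimal support_deriv_subset (isClosed_tsupport g)).trans hsupp)
    refine ⟨C, hC0, fun ζ hζ => ?_⟩
    have h1 := hC ζ hζ
    rw [ibp hg hgc ζ, norm_mul, norm_mul, Complex.norm_I, one_mul] at h1
    calc ‖ζ‖ ^ (k + 1) * ‖∫ x : ℝ, g x * texp ζ x‖
        = ‖ζ‖ ^ k * (‖ζ‖ * ‖∫ x : ℝ, g x * texp ζ x‖) := by ring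
      _ ≤ C := h1

lemma decay_min {g : ℝ → ℂ} (hg : ContDiff ℝ (⊤ : ℕ∞) g) (hgc : HasCompactSupport g)
    (hsupp : tsupport g ⊆ Set.Iio 0) (k : ℕ) : ∃ C : ℝ, 0 ≤ C ∧ ∀ ζ : ℂ, 0 ≤ ζ.im →
      0 < ‖ζ‖ → ‖∫ x : ℝ, g x * texp ζ x‖ ≤ C * min 1 (‖ζ‖⁻¹ ^ k) := by
  obtain ⟨C0, hC00, hC0⟩ := decay 0 g hg hgc hsupp
  obtain ⟨Ck, hCk0, hCk⟩ := decay k g hg hgc hsupp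
  refine ⟨max C0 Ck, le_max_of_le_left hC00, fun ζ hζ hζ0 => ?_⟩
  rw [mul_min_of_nonneg _ _ (le_max_of_le_left hC00)]
  refine le_min ?_ ?_
  · have := hC0 ζ hζ
    simp only [pow_zero, one_mul] at this
    calc ‖∫ x : ℝ, g x * texp ζ x‖ ≤ C0 := this
      _ ≤ max C0 Ck * 1 := by rw [mul_one]; exact le_max_left _ _
  · have h1 := hCk ζ hζ
    have h2 : ‖∫ x : ℝ, g x * texp ζ x‖
        = ‖ζ‖⁻¹ ^ k * (‖ζ‖ ^ k * ‖∫ x : ℝ, g x * texp ζ x‖) := by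
      rw [inv_pow, inv_mul_cancel_left₀ (by positivity)]
    rw [h2, mul_comm (max C0 Ck)]
    exact mul_le_mul_of_nonneg_left (h1.trans (le_max_right _ _)) (by positivity)

lemma phi_hasDerivAt {g : ℝ → ℂ} (hg : Continuous g) (hgc : HasCompactSupport g) (ζ : ℂ) :
    HasDerivAt (fun w : ℂ => ∫ x : ℝ, g x * texp w x)
      (∫ x : ℝ, -(Complex.I * x) * (g x * texp ζ x)) ζ := by
  have key := hasDerivAt_integral_of_dominated_loc_of_deriv_le (μ := (volume : Measure ℝ))
    (F := fun (w : ℂ) (x : ℝ) => g x * texp w x)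
    (F' := fun (w : ℂ) (x : ℝ) => -(Complex.I * x) * (g x * texp w x))
    (x₀ := ζ) (s := Metric.ball ζ 1)
    (bound := fun x : ℝ => ‖g x‖ * (|x| * Real.exp ((|ζ.im| + 1) * |x|)))
    (Metric.ball_mem_nhds ζ one_pos)
    (Filter.Eventually.of_forall fun w =>
      ((hg.mul (texp_continuous w)).aestronglyMeasurable))
    (integrable_mul_texp hg hgc ζ)
    (((continuous_const.mul Complex.continuous_ofReal).neg.mul
      (hg.mul (texp_continuous ζ))).aestronglyMeasurable)
    ?_ ?_ ?_
  · exact key.2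
  · filter_upwards with x
    intro w hw
    have him : |w.im| ≤ |ζ.im| + 1 := by
      have h1 : |w.im - ζ.im| ≤ ‖w - ζ‖ := by
        rw [← Complex.sub_im]
        exact Complex.abs_im_le_norm (w - ζ)
      have h2 : ‖w - ζ‖ < 1 := by rwa [Metric.mem_ball, Complex.dist_eq] at hw
      calc |w.im| ≤ |ζ.im| + |w.im - ζ.im| := by
            have := abs_sub_abs_le_abs_sub w.im ζ.im
            linarith [abs_sub_comm w.im ζ.im]
        _ ≤ |ζ.im| + 1 := by linarith
    rw [norm_mul, norm_neg, norm_mul, Complex.norm_I, one_mul, Complex.norm_real,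
      Real.norm_eq_abs, norm_mul, norm_texp]
    calc |x| * (‖g x‖ * Real.exp (w.im * x))
        ≤ |x| * (‖g x‖ * Real.exp ((|ζ.im| + 1) * |x|)) := by
          apply mul_le_mul_of_nonneg_left _ (abs_nonneg x)
          apply mul_le_mul_of_nonneg_left _ (norm_nonneg _)
          apply Real.exp_le_exp.2
          calc w.im * x ≤ |w.im * x| := le_abs_self _
            _ = |w.im| * |x| := abs_mul _ _
            _ ≤ (|ζ.im| + 1) * |x| := by gcongr
      _ = ‖g x‖ * (|x| * Real.exp ((|ζ.im| + 1) * |x|)) := by ring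
  · apply Continuous.integrable_of_hasCompactSupport
    · fun_prop
    · exact hgc.norm.mul_right
  · filter_upwards with x
    intro w hw
    have h0 : HasDerivAt (fun w : ℂ => -(Complex.I * ↑x) * w) (-(Complex.I * ↑x)) w := by
      simpa using (hasDerivAt_id w).const_mul (-(Complex.I * (x : ℂ)))
    have h1 := (h0.cexp).const_mul (g x)
    have h2 : ∀ w : ℂ, g x * Complex.exp (-(Complex.I * ↑x) * w) = g x * texp w x := by
      intro w
      rw [texp]
      ring_nf
    simp only [h2] at h1
    exact h1.congr_deriv (by rw [texp]; ring_nf)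

lemma minpow_integrable (m : ℕ) (hm : 1 ≤ m) {r : ℝ} (hr : 0 < r) :
    IntegrableOn (fun p : ℝ => (min 1 ((r * p)⁻¹ ^ m)) ^ 2 * p ^ (m - 1)) (Set.Ioi 0) := by
  have hmeas : Measurable (fun p : ℝ => (min 1 ((r * p)⁻¹ ^ m)) ^ 2 * p ^ (m - 1)) := by
    apply Measurable.mul _ (measurable_id.pow_const (m - 1))
    exact (measurable_const.min (((measurable_id.const_mul r).inv).pow_const m)).pow_const 2
  rw [← Set.Ioc_union_Ioi_eq_Ioi (le_of_lt (inv_pos.2 hr))]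
  apply IntegrableOn.union
  · apply Integrable.mono' ((continuous_pow (m - 1)).integrableOn_Ioc)
      hmeas.aestronglyMeasurable
    rw [ae_restrict_iff' measurableSet_Ioc]
    filter_upwards with p hp
    have hp0 : 0 < p := hp.1
    have h1 : min 1 ((r * p)⁻¹ ^ m) ≤ 1 := min_le_left _ _
    have h2 : (0:ℝ) ≤ min 1 ((r * p)⁻¹ ^ m) := le_min zero_le_one (by positivity)
    rw [Real.norm_eq_abs, _root_.abs_of_nonneg (by positivity)]
    exact mul_le_of_le_one_left (pow_nonneg hp0.le _) (pow_le_one₀ h2 h1)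
  · apply Integrable.mono'
      ((integrableOn_Ioi_rpow_of_lt (show -(m:ℝ) - 1 < -1 by
        have : (1:ℝ) ≤ m := by exact_mod_cast hm
        linarith) (inv_pos.2 hr)).const_mul (r⁻¹ ^ (2 * m)))
      hmeas.aestronglyMeasurable
    rw [ae_restrict_iff' measurableSet_Ioi]
    filter_upwards with p hp
    have hp0 : 0 < p := lt_trans (inv_pos.2 hr) hp
    have key : ((r * p)⁻¹ ^ m) ^ 2 * p ^ (m - 1) = r⁻¹ ^ (2 * m) * p ^ (-(m:ℝ) - 1) := by
      rw [show -(m:ℝ) - 1 = ((m - 1 : ℕ) : ℝ) + (-(2 * m : ℕ) : ℝ) by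
          push_cast [Nat.cast_sub hm]; ring,
        Real.rpow_add hp0, Real.rpow_natCast, Real.rpow_neg hp0.le, Real.rpow_natCast]
      field_simp
      rw [one_div, one_div, ← pow_mul, mul_inv, mul_pow, mul_comm m 2, mul_assoc, ← mul_pow,
        inv_mul_cancel₀ hp0.ne', one_pow, mul_one]
    rw [Real.norm_eq_abs, _root_.abs_of_nonneg (by positivity), ← key]
    have h2 : (0:ℝ) ≤ min 1 ((r * p)⁻¹ ^ m) := le_min zero_le_one (by positivity)
    have h1 : min 1 ((r * p)⁻¹ ^ m) ≤ (r * p)⁻¹ ^ m := min_le_right _ _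
    exact mul_le_mul_of_nonneg_right (pow_le_pow_left₀ h2 h1 2) (pow_nonneg hp0.le _)

lemma dom_integrable (m : ℕ) (hm : 1 ≤ m) {r : ℝ} (hr : 0 < r) {G : ℝ → ℂ}
    (hGm : Measurable G)
    (hG2 : IntegrableOn (fun p : ℝ => ‖G p‖ ^ 2 * p ^ (m - 1)) (Set.Ioi 0)) :
    IntegrableOn (fun p : ℝ => ‖G p‖ * (min 1 ((r * p)⁻¹ ^ m) * p ^ (m - 1)))
      (Set.Ioi 0) := by
  apply Integrable.mono' (((hG2.add (minpow_integrable m hm hr)).const_mul (1/2 : ℝ)))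
  · apply Measurable.aestronglyMeasurable
    apply (hGm.norm).mul
    exact ((measurable_const.min (((measurable_id.const_mul r).inv).pow_const m)).mul
      (measurable_id.pow_const (m - 1)))
  · rw [ae_restrict_iff' measurableSet_Ioi]
    filter_upwards with p hp
    have hp0 : (0:ℝ) < p := hp
    have h2 : (0:ℝ) ≤ min 1 ((r * p)⁻¹ ^ m) := le_min zero_le_one (by positivity)
    rw [Real.norm_eq_abs, _root_.abs_of_nonneg (by positivity)]
    simp only [Pi.add_apply]
    have hsq := sq_nonneg (‖G p‖ - min 1 ((r * p)⁻¹ ^ m))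
    nlinarith [pow_nonneg hp0.le (m - 1), mul_nonneg (mul_nonneg (norm_nonneg (G p)) h2) (pow_nonneg hp0.le (m-1)), sq_nonneg (‖G p‖ - min 1 ((r * p)⁻¹ ^ m)), pow_nonneg hp0.le (m-1)]

lemma min_anti {r₁ r : ℝ} (h1 : 0 < r₁) (hr : r₁ ≤ r) {p : ℝ} (hp : 0 < p) (k : ℕ) :
    min 1 ((r * p)⁻¹ ^ k) ≤ min 1 ((r₁ * p)⁻¹ ^ k) := by
  have hr0 : 0 < r := lt_of_lt_of_le h1 hr
  apply min_le_min le_rfl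
  apply pow_le_pow_left₀ (by positivity)
  apply inv_anti₀ (by positivity)
  exact mul_le_mul_of_nonneg_right hr hp.le

lemma tmin_le {t : ℝ} (ht : 0 < t) (k : ℕ) :
    t * min 1 (t⁻¹ ^ (k + 2)) ≤ min 1 (t⁻¹ ^ k) := by
  rcases le_or_gt t 1 with h | h
  · have hinv : 1 ≤ t⁻¹ := (one_le_inv₀ ht).mpr h
    rw [min_eq_left (one_le_pow₀ hinv : (1:ℝ) ≤ t⁻¹ ^ k)]
    calc t * min 1 (t⁻¹ ^ (k + 2)) ≤ t * 1 :=
          mul_le_mul_of_nonneg_left (min_le_left _ _) ht.le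
      _ = t := mul_one t
      _ ≤ 1 := h
  · have hinv : t⁻¹ ≤ 1 := inv_le_one_of_one_le₀ h.le
    have hinv0 : (0:ℝ) ≤ t⁻¹ := by positivity
    have h1 : t * min 1 (t⁻¹ ^ (k + 2)) ≤ t * t⁻¹ ^ (k + 2) :=
      mul_le_mul_of_nonneg_left (min_le_right _ _) ht.le
    have hc : t * t⁻¹ = 1 := mul_inv_cancel₀ (ne_of_gt ht)
    have h2 : t * t⁻¹ ^ (k + 2) = t⁻¹ ^ (k + 1) := by
      calc t * t⁻¹ ^ (k + 2) = t * t⁻¹ * t⁻¹ ^ (k + 1) := by ring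
        _ = t⁻¹ ^ (k + 1) := by rw [hc, one_mul]
    refine (h1.trans_eq h2).trans (le_min (pow_le_one₀ hinv0 hinv) ?_)
    exact pow_le_pow_of_le_one hinv0 hinv (by omega)

lemma pmul_min_le {r p : ℝ} (hr : 0 < r) (hp : 0 < p) (k : ℕ) :
    p * min 1 ((r * p)⁻¹ ^ (k + 2)) ≤ r⁻¹ * min 1 ((r * p)⁻¹ ^ k) := by
  have h := tmin_le (mul_pos hr hp) k
  calc p * min 1 ((r * p)⁻¹ ^ (k + 2)) = r⁻¹ * (r * p * min 1 ((r * p)⁻¹ ^ (k + 2))) := by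
        field_simp
    _ ≤ r⁻¹ * min 1 ((r * p)⁻¹ ^ k) := by
        apply mul_le_mul_of_nonneg_left h (by positivity)

lemma strip_im_nonneg {z : ℂ} (h1 : -(1/2 : ℝ) ≤ z.im) (h2 : z.im ≤ 0) {p : ℝ} (hp : 0 ≤ p) :
    0 ≤ (Complex.exp (-(2 * (π : ℂ) * z)) * p).im := by
  have him : (-(2 * (π : ℂ) * z)).im = -(2 * π * z.im) := by
    simp [Complex.mul_im]
  have hsin : 0 ≤ Real.sin (-(2 * π * z.im)) := by
    apply Real.sin_nonneg_of_nonneg_of_le_pi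
    · nlinarith [Real.pi_pos]
    · nlinarith [Real.pi_pos]
  have : (Complex.exp (-(2 * (π : ℂ) * z)) * (p : ℂ)).im
      = Real.exp ((-(2 * (π : ℂ) * z)).re) * Real.sin (-(2 * π * z.im)) * p := by
    rw [Complex.mul_im, Complex.ofReal_re, Complex.ofReal_im, Complex.exp_im, him]
    ring
  rw [this]
  positivity

lemma strip_norm_zeta (z : ℂ) {p : ℝ} (hp : 0 ≤ p) :
    ‖Complex.exp (-(2 * (π : ℂ) * z)) * p‖ = Real.exp (-(2 * π * z.re)) * p := by
  rw [norm_mul, Complex.norm_exp, Complex.norm_real, Real.norm_eq_abs,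
    _root_.abs_of_nonneg hp]
  congr 2
  simp [Complex.mul_re]

lemma norm_exp_pim (m : ℕ) (z : ℂ) :
    ‖Complex.exp (-((π : ℂ) * m * z))‖ = Real.exp (-(π * m * z.re)) := by
  rw [Complex.norm_exp]
  congr 1
  simp [Complex.mul_re]

lemma norm_exp_2pi (z : ℂ) : ‖Complex.exp (-(2 * (π : ℂ) * z))‖ = Real.exp (-(2 * π * z.re)) := by
  rw [Complex.norm_exp]
  congr 1
  simp [Complex.mul_re]

lemma integrand_aesm {G : ℝ → ℂ} (hGm : Measurable G) {h : ℂ → ℂ} (hh : Continuous h)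
    (m : ℕ) (a b : ℂ) :
    AEStronglyMeasurable
      (fun p : ℝ => (starRingEnd ℂ) (G p) * a * h (b * p) * (p : ℂ) ^ (m - 1))
      (volume.restrict (Set.Ioi 0)) := by
  apply Measurable.aestronglyMeasurable
  apply Measurable.mul _ ((Complex.continuous_ofReal.pow (m - 1)).measurable)
  apply Measurable.mul
  · exact (Complex.continuous_conj.measurable.comp hGm).mul_const a
  · exact (hh.comp (continuous_const.mul Complex.continuous_ofReal)).measurable

lemma norm_integrand {G : ℝ → ℂ} {h : ℂ → ℂ} {m : ℕ} {z : ℂ} {p : ℝ} (hp : 0 ≤ p) :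
    ‖(starRingEnd ℂ) (G p) * Complex.exp (-((π : ℂ) * m * z)) *
        h (Complex.exp (-(2 * (π : ℂ) * z)) * p) * (p : ℂ) ^ (m - 1)‖
      = ‖G p‖ * (Real.exp (-(π * m * z.re)) *
          (‖h (Complex.exp (-(2 * (π : ℂ) * z)) * p)‖ * p ^ (m - 1))) := by
  rw [norm_mul, norm_mul, norm_mul, RCLike.norm_conj, norm_exp_pim, norm_pow,
    Complex.norm_real, Real.norm_eq_abs, _root_.abs_of_nonneg hp]
  ring

set_option maxHeartbeats 2000000 in
theorem stmt2 (m : ℕ) (hm : 1 ≤ m) (f : ℝ → ℂ)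
    (hf : ContDiff ℝ (⊤ : ℕ∞) f) (hfc : HasCompactSupport f)
    (hsupp : tsupport f ⊆ Set.Iio 0)
    (G : ℝ → ℂ) (hGm : Measurable G)
    (hG2 : IntegrableOn (fun p : ℝ => ‖G p‖ ^ 2 * p ^ (m - 1)) (Set.Ioi 0)) :
    let fhat : ℂ → ℂ := fun ζ =>
      ((Real.sqrt (2 * π) : ℝ) : ℂ)⁻¹ * ∫ x : ℝ, f x * Complex.exp (-(Complex.I * ζ * x))
    let F : ℂ → ℂ := fun z => ∫ p in Set.Ioi (0 : ℝ),
      (starRingEnd ℂ) (G p) * Complex.exp (-((π : ℂ) * m * z)) *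
        fhat (Complex.exp (-(2 * (π : ℂ) * z)) * p) * (p : ℂ) ^ (m - 1)
    (∀ z ∈ {z : ℂ | -(1 / 2) ≤ z.im ∧ z.im ≤ 0}, IntegrableOn (fun p : ℝ =>
        (starRingEnd ℂ) (G p) * Complex.exp (-((π : ℂ) * m * z)) *
          fhat (Complex.exp (-(2 * (π : ℂ) * z)) * p) * (p : ℂ) ^ (m - 1)) (Set.Ioi 0)) ∧
    ContinuousOn F {z : ℂ | -(1 / 2) ≤ z.im ∧ z.im ≤ 0} ∧
    DifferentiableOn ℂ F {z : ℂ | -(1 / 2) < z.im ∧ z.im < 0} := by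
  intro fhat F
  set c : ℂ := ((Real.sqrt (2 * π) : ℝ) : ℂ)⁻¹ with hc
  set c₀ : ℝ := (Real.sqrt (2 * π))⁻¹ with hc₀
  have hc₀0 : 0 ≤ c₀ := by positivity
  have hcnorm : ‖c‖ = c₀ := by
    rw [hc, hc₀, norm_inv, Complex.norm_real, Real.norm_eq_abs,
      _root_.abs_of_nonneg (Real.sqrt_nonneg _)]
  -- the function g₁ x = -(I x) f x
  set g₁ : ℝ → ℂ := fun x => -(Complex.I * x) * f x with hg₁def
  have hg₁cd : ContDiff ℝ (⊤ : ℕ∞) g₁ :=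
    ((contDiff_const.mul Complex.ofRealCLM.contDiff).neg).mul hf
  have hg₁c : HasCompactSupport g₁ := hfc.mul_left
  have hg₁s : tsupport g₁ ⊆ Set.Iio 0 := by
    refine subset_trans (closure_minimal ?_ (isClosed_tsupport f)) hsupp
    intro x hx
    simp only [hg₁def, Function.mem_support, ne_eq] at hx
    apply subset_tsupport f
    simp only [Function.mem_support, ne_eq]
    intro hfx
    exact hx (by rw [hfx, mul_zero])
  obtain ⟨Cf, hCf0, hCf⟩ := decay_min hf hfc hsupp m
  obtain ⟨Cg, hCg0, hCg⟩ := decay_min hg₁cd hg₁c hg₁s (m + 2)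
  -- fhat as c * Φ
  have hfhat : ∀ ζ : ℂ, fhat ζ = c * ∫ x : ℝ, f x * texp ζ x := fun ζ => rfl
  set Ψ : ℂ → ℂ := fun w => ∫ x : ℝ, g₁ x * texp w x with hΨdef
  -- differentiability and continuity of fhat and Ψ
  have hΦd : ∀ w : ℂ, HasDerivAt (fun w : ℂ => ∫ x : ℝ, f x * texp w x)
      (∫ x : ℝ, -(Complex.I * x) * (f x * texp w x)) w :=
    phi_hasDerivAt hf.continuous hfc
  have hfd : ∀ w : ℂ, HasDerivAt fhat (c * Ψ w) w := by
    intro w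
    have h1 := (hΦd w).const_mul c
    have h2 : (∫ x : ℝ, -(Complex.I * x) * (f x * texp w x)) = Ψ w := by
      rw [hΨdef]
      apply integral_congr_ae
      filter_upwards with x
      rw [hg₁def]
      ring
    rw [h2] at h1
    exact h1
  have hfhatcont : Continuous fhat := by
    have : Differentiable ℂ fhat := fun w => (hfd w).differentiableAt
    exact this.continuous
  have hΨcont : Continuous Ψ := by
    have : Differentiable ℂ Ψ := fun w =>
      (phi_hasDerivAt hg₁cd.continuous hg₁c w).differentiableAt
    exact this.continuous
  -- pointwise bounds
  have fhat_bound : ∀ (r₁ : ℝ), 0 < r₁ → ∀ z : ℂ, -(1/2 : ℝ) ≤ z.im → z.im ≤ 0 →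
      r₁ ≤ Real.exp (-(2 * π * z.re)) → ∀ p : ℝ, 0 < p →
      ‖fhat (Complex.exp (-(2 * (π : ℂ) * z)) * p)‖ ≤ c₀ * Cf * min 1 ((r₁ * p)⁻¹ ^ m) := by
    intro r₁ hr₁ z h1 h2 hr p hp
    set ζ : ℂ := Complex.exp (-(2 * (π : ℂ) * z)) * p with hζ
    have him : 0 ≤ ζ.im := strip_im_nonneg h1 h2 hp.le
    have hnz : ‖ζ‖ = Real.exp (-(2 * π * z.re)) * p := strip_norm_zeta z hp.le
    have hpos : 0 < ‖ζ‖ := by rw [hnz]; positivity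
    rw [hfhat, norm_mul, hcnorm]
    have h := hCf ζ him hpos
    calc c₀ * ‖∫ x : ℝ, f x * texp ζ x‖ ≤ c₀ * (Cf * min 1 (‖ζ‖⁻¹ ^ m)) :=
          mul_le_mul_of_nonneg_left h hc₀0
      _ ≤ c₀ * (Cf * min 1 ((r₁ * p)⁻¹ ^ m)) := by
          apply mul_le_mul_of_nonneg_left _ hc₀0
          apply mul_le_mul_of_nonneg_left _ hCf0
          rw [hnz]
          exact min_anti hr₁ hr hp m
      _ = c₀ * Cf * min 1 ((r₁ * p)⁻¹ ^ m) := by ring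
  have psi_bound : ∀ (r₁ : ℝ), 0 < r₁ → ∀ z : ℂ, -(1/2 : ℝ) ≤ z.im → z.im ≤ 0 →
      r₁ ≤ Real.exp (-(2 * π * z.re)) → ∀ p : ℝ, 0 < p →
      ‖Ψ (Complex.exp (-(2 * (π : ℂ) * z)) * p)‖ ≤ Cg * min 1 ((r₁ * p)⁻¹ ^ (m + 2)) := by
    intro r₁ hr₁ z h1 h2 hr p hp
    set ζ : ℂ := Complex.exp (-(2 * (π : ℂ) * z)) * p with hζ
    have him : 0 ≤ ζ.im := strip_im_nonneg h1 h2 hp.le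
    have hnz : ‖ζ‖ = Real.exp (-(2 * π * z.re)) * p := strip_norm_zeta z hp.le
    have hpos : 0 < ‖ζ‖ := by rw [hnz]; positivity
    have h := hCg ζ him hpos
    calc ‖Ψ ζ‖ ≤ Cg * min 1 (‖ζ‖⁻¹ ^ (m + 2)) := h
      _ ≤ Cg * min 1 ((r₁ * p)⁻¹ ^ (m + 2)) := by
          apply mul_le_mul_of_nonneg_left _ hCg0
          rw [hnz]
          exact min_anti hr₁ hr hp (m + 2)
  -- Conjunct 1
  have int_all : ∀ z : ℂ, -(1/2 : ℝ) ≤ z.im → z.im ≤ 0 → IntegrableOn (fun p : ℝ =>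
      (starRingEnd ℂ) (G p) * Complex.exp (-((π : ℂ) * m * z)) *
        fhat (Complex.exp (-(2 * (π : ℂ) * z)) * p) * (p : ℂ) ^ (m - 1)) (Set.Ioi 0) := by
    intro z h1 h2
    set rz : ℝ := Real.exp (-(2 * π * z.re)) with hrz
    have hrz0 : 0 < rz := Real.exp_pos _
    apply Integrable.mono' (((dom_integrable m hm hrz0 hGm hG2).const_mul
      (Real.exp (-(π * m * z.re)) * (c₀ * Cf))))
    · exact integrand_aesm hGm hfhatcont m _ _
    · rw [ae_restrict_iff' measurableSet_Ioi]
      filter_upwards with p hp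
      have hp0 : (0:ℝ) < p := hp
      rw [norm_integrand hp0.le]
      have key := fhat_bound rz hrz0 z h1 h2 le_rfl p hp0
      calc ‖G p‖ * (Real.exp (-(π * m * z.re)) *
            (‖fhat (Complex.exp (-(2 * (π : ℂ) * z)) * p)‖ * p ^ (m - 1)))
          = (‖G p‖ * Real.exp (-(π * m * z.re)) * p ^ (m - 1)) *
            ‖fhat (Complex.exp (-(2 * (π : ℂ) * z)) * p)‖ := by ring
        _ ≤ (‖G p‖ * Real.exp (-(π * m * z.re)) * p ^ (m - 1)) *
            (c₀ * Cf * min 1 ((rz * p)⁻¹ ^ m)) := by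
            apply mul_le_mul_of_nonneg_left key
            exact mul_nonneg (mul_nonneg (norm_nonneg _) (Real.exp_pos _).le)
              (pow_nonneg hp0.le _)
        _ = Real.exp (-(π * m * z.re)) * (c₀ * Cf) *
            (‖G p‖ * (min 1 ((rz * p)⁻¹ ^ m) * p ^ (m - 1))) := by ring
  refine ⟨fun z hz => int_all z hz.1 hz.2, ?_, ?_⟩
  · -- continuity
    intro z₀ hz₀
    obtain ⟨h1, h2⟩ := hz₀
    set r₁ : ℝ := Real.exp (-(2 * π * (z₀.re + 1))) with hr₁def
    have hr₁0 : 0 < r₁ := Real.exp_pos _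
    set K : ℝ := Real.exp (π * m * (|z₀.re| + 1)) with hKdef
    have hev : {z : ℂ | dist z z₀ < 1} ∩ {z : ℂ | -(1 / 2) ≤ z.im ∧ z.im ≤ 0} ∈
        nhdsWithin z₀ {z : ℂ | -(1 / 2) ≤ z.im ∧ z.im ≤ 0} :=
      Filter.inter_mem (nhdsWithin_le_nhds (Metric.ball_mem_nhds z₀ one_pos))
        self_mem_nhdsWithin
    apply tendsto_integral_filter_of_dominated_convergence
      (fun p : ℝ => K * (c₀ * Cf) * (‖G p‖ * (min 1 ((r₁ * p)⁻¹ ^ m) * p ^ (m - 1))))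
    · exact Filter.Eventually.of_forall fun z => integrand_aesm hGm hfhatcont m _ _
    · filter_upwards [hev] with z hz
      obtain ⟨hzd, hz1, hz2⟩ := hz
      have hzd' : dist z z₀ < 1 := hzd
      have hre : |z.re - z₀.re| ≤ 1 := by
        have := Complex.abs_re_le_norm (z - z₀)
        rw [Complex.sub_re] at this
        rw [← Complex.dist_eq] at this
        linarith
      have hreu : z.re ≤ z₀.re + 1 := by
        have := abs_le.1 hre
        linarith [this.2]
      have hrel : z₀.re - 1 ≤ z.re := by
        have := abs_le.1 hre
        linarith [this.1]
      have hEK : Real.exp (-(π * m * z.re)) ≤ K := by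
        rw [hKdef]
        apply Real.exp_le_exp.2
        have hμ : (0:ℝ) ≤ π * m := by positivity
        have : -z.re ≤ |z₀.re| + 1 := by
          have := neg_abs_le z₀.re
          linarith
        nlinarith
      have hrle : r₁ ≤ Real.exp (-(2 * π * z.re)) := by
        rw [hr₁def]
        apply Real.exp_le_exp.2
        nlinarith [Real.pi_pos]
      rw [ae_restrict_iff' measurableSet_Ioi]
      filter_upwards with p hp
      have hp0 : (0:ℝ) < p := hp
      rw [norm_integrand hp0.le]
      have key := fhat_bound r₁ hr₁0 z hz1 hz2 hrle p hp0
      calc ‖G p‖ * (Real.exp (-(π * m * z.re)) *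
            (‖fhat (Complex.exp (-(2 * (π : ℂ) * z)) * p)‖ * p ^ (m - 1)))
          ≤ ‖G p‖ * (K * ((c₀ * Cf * min 1 ((r₁ * p)⁻¹ ^ m)) * p ^ (m - 1))) := by
            apply mul_le_mul_of_nonneg_left _ (norm_nonneg _)
            apply mul_le_mul hEK (mul_le_mul_of_nonneg_right key (pow_nonneg hp0.le _))
              (mul_nonneg (norm_nonneg _) (pow_nonneg hp0.le _)) ((Real.exp_pos _).le.trans hEK)
        _ = K * (c₀ * Cf) * (‖G p‖ * (min 1 ((r₁ * p)⁻¹ ^ m) * p ^ (m - 1))) := by ring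
    · exact (dom_integrable m hm hr₁0 hGm hG2).const_mul _
    · apply Filter.Eventually.of_forall
      intro p
      apply Filter.Tendsto.mono_left _ nhdsWithin_le_nhds
      apply Continuous.tendsto
      apply Continuous.mul _ continuous_const
      apply Continuous.mul
      · exact continuous_const.mul (Complex.continuous_exp.comp (by fun_prop))
      · exact hfhatcont.comp ((Complex.continuous_exp.comp (by fun_prop)).mul continuous_const)
  · -- differentiability
    intro z₀ hz₀
    obtain ⟨h1, h2⟩ := hz₀
    set r₁ : ℝ := Real.exp (-(2 * π * (z₀.re + 1))) with hr₁def
    have hr₁0 : 0 < r₁ := Real.exp_pos _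
    set r₂ : ℝ := Real.exp (-(2 * π * (z₀.re - 1))) with hr₂def
    have hr₂0 : 0 < r₂ := Real.exp_pos _
    set K : ℝ := Real.exp (π * m * (|z₀.re| + 1)) with hKdef
    set ε : ℝ := min (min (-z₀.im) (z₀.im + 1/2)) 1 with hεdef
    have hε : 0 < ε := by
      apply lt_min (lt_min (by linarith) (by linarith)) one_pos
    have hball : ∀ z ∈ Metric.ball z₀ ε,
        -(1/2 : ℝ) ≤ z.im ∧ z.im ≤ 0 ∧ |z.re - z₀.re| ≤ 1 := by
      intro z hz
      rw [Metric.mem_ball, Complex.dist_eq] at hz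
      have hie : |z.im - z₀.im| < ε := by
        calc |z.im - z₀.im| = |(z - z₀).im| := by rw [Complex.sub_im]
          _ ≤ ‖z - z₀‖ := Complex.abs_im_le_norm _
          _ < ε := hz
      have hre : |z.re - z₀.re| ≤ 1 := by
        have h3 : |(z - z₀).re| ≤ ‖z - z₀‖ := Complex.abs_re_le_norm _
        rw [Complex.sub_re] at h3
        have : ε ≤ 1 := min_le_right _ _
        linarith
      have hie1 := abs_le.1 hie.le
      have hε1 : ε ≤ -z₀.im := le_trans (min_le_left _ _) (min_le_left _ _)
      have hε2 : ε ≤ z₀.im + 1/2 := le_trans (min_le_left _ _) (min_le_right _ _)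
      refine ⟨by linarith [hie1.1], by linarith [hie1.2], hre⟩
    -- the derivative candidate
    set F' : ℂ → ℝ → ℂ := fun z p => (starRingEnd ℂ) (G p) *
      (Complex.exp (-((π : ℂ) * m * z)) * (-((π : ℂ) * m)) *
          fhat (Complex.exp (-(2 * (π : ℂ) * z)) * p) +
        Complex.exp (-((π : ℂ) * m * z)) *
          (c * Ψ (Complex.exp (-(2 * (π : ℂ) * z)) * p) *
            (Complex.exp (-(2 * (π : ℂ) * z)) * (-(2 * (π : ℂ))) * p))) *
      (p : ℂ) ^ (m - 1) with hF'def
    have key := hasDerivAt_integral_of_dominated_loc_of_deriv_le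
      (μ := volume.restrict (Set.Ioi (0:ℝ)))
      (F := fun (z : ℂ) (p : ℝ) => (starRingEnd ℂ) (G p) * Complex.exp (-((π : ℂ) * m * z)) *
        fhat (Complex.exp (-(2 * (π : ℂ) * z)) * p) * (p : ℂ) ^ (m - 1))
      (F' := F') (x₀ := z₀) (s := Metric.ball z₀ ε)
      (bound := fun p : ℝ => (K * (π * m) * (c₀ * Cf) + K * (c₀ * Cg) * (2 * π) * (r₂ * r₁⁻¹)) *
        (‖G p‖ * (min 1 ((r₁ * p)⁻¹ ^ m) * p ^ (m - 1))))
      (Metric.ball_mem_nhds z₀ hε)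
      (Filter.Eventually.of_forall fun z => integrand_aesm hGm hfhatcont m _ _)
      (int_all z₀ h1.le h2.le)
      ?_ ?_ ?_ ?_
    · exact key.2.differentiableAt.differentiableWithinAt
    · -- measurability of F' z₀
      apply Measurable.aestronglyMeasurable
      apply Measurable.mul _ ((Complex.continuous_ofReal.pow (m - 1)).measurable)
      apply (Complex.continuous_conj.measurable.comp hGm).mul
      have hcont : Continuous (fun p : ℝ =>
          Complex.exp (-((π : ℂ) * m * z₀)) * (-((π : ℂ) * m)) *
            fhat (Complex.exp (-(2 * (π : ℂ) * z₀)) * p) +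
          Complex.exp (-((π : ℂ) * m * z₀)) *
            (c * Ψ (Complex.exp (-(2 * (π : ℂ) * z₀)) * p) *
              (Complex.exp (-(2 * (π : ℂ) * z₀)) * (-(2 * (π : ℂ))) * p))) := by
        apply Continuous.add
        · exact continuous_const.mul
            (hfhatcont.comp (continuous_const.mul Complex.continuous_ofReal))
        · apply continuous_const.mul
          apply Continuous.mul
          · exact continuous_const.mul
              (hΨcont.comp (continuous_const.mul Complex.continuous_ofReal))
          · exact continuous_const.mul Complex.continuous_ofReal
      exact hcont.measurable
    · -- bound on F'
      rw [ae_restrict_iff' measurableSet_Ioi]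
      filter_upwards with p hp
      intro z hz
      have hp0 : (0:ℝ) < p := hp
      obtain ⟨hz1, hz2, hre⟩ := hball z hz
      have hreu : z.re ≤ z₀.re + 1 := by have := abs_le.1 hre; linarith [this.2]
      have hrel : z₀.re - 1 ≤ z.re := by have := abs_le.1 hre; linarith [this.1]
      have hEK : Real.exp (-(π * m * z.re)) ≤ K := by
        rw [hKdef]
        apply Real.exp_le_exp.2
        have hμ : (0:ℝ) ≤ π * m := by positivity
        have : -z.re ≤ |z₀.re| + 1 := by
          have := neg_abs_le z₀.re
          linarith
        nlinarith
      have hrle : r₁ ≤ Real.exp (-(2 * π * z.re)) := by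
        rw [hr₁def]; apply Real.exp_le_exp.2; nlinarith [Real.pi_pos]
      have hrle2 : Real.exp (-(2 * π * z.re)) ≤ r₂ := by
        rw [hr₂def]; apply Real.exp_le_exp.2; nlinarith [Real.pi_pos]
      have keyf := fhat_bound r₁ hr₁0 z hz1 hz2 hrle p hp0
      have keyp := psi_bound r₁ hr₁0 z hz1 hz2 hrle p hp0
      have hpmin := pmul_min_le hr₁0 hp0 m
      -- compute the norm of F' z p
      have hK0 : (0:ℝ) < K := by rw [hKdef]; exact Real.exp_pos _
      have hEr : ‖Complex.exp (-((π : ℂ) * m * z))‖ = Real.exp (-(π * m * z.re)) :=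
        norm_exp_pim m z
      have hwr : ‖Complex.exp (-(2 * (π : ℂ) * z))‖ = Real.exp (-(2 * π * z.re)) :=
        norm_exp_2pi z
      have hπm : ‖(-((π : ℂ) * (m : ℂ)))‖ = π * m := by
        rw [norm_neg, norm_mul, Complex.norm_real, Real.norm_eq_abs,
          _root_.abs_of_nonneg Real.pi_pos.le, Complex.norm_natCast]
      have h2π : ‖(-(2 * (π : ℂ)))‖ = 2 * π := by
        rw [norm_neg, norm_mul, Complex.norm_real, Real.norm_eq_abs,
          _root_.abs_of_nonneg Real.pi_pos.le]
        norm_num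
      set ζ : ℂ := Complex.exp (-(2 * (π : ℂ) * z)) * (p : ℂ) with hζdef
      set min1m : ℝ := min 1 ((r₁ * p)⁻¹ ^ m) with hmin1m
      have hmin0 : 0 ≤ min1m := le_min zero_le_one (by positivity)
      have hmin20 : (0:ℝ) ≤ min 1 ((r₁ * p)⁻¹ ^ (m + 2)) := le_min zero_le_one (by positivity)
      have bound1 : ‖Complex.exp (-((π : ℂ) * m * z)) * (-((π : ℂ) * m)) * fhat ζ‖
          ≤ K * (π * m) * (c₀ * Cf * min1m) := by
        rw [norm_mul, norm_mul, hEr, hπm]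
        apply mul_le_mul _ keyf (norm_nonneg _) (by positivity)
        exact mul_le_mul_of_nonneg_right hEK (by positivity)
      have bound2 : ‖Complex.exp (-((π : ℂ) * m * z)) *
          (c * Ψ ζ * (Complex.exp (-(2 * (π : ℂ) * z)) * (-(2 * (π : ℂ))) * p))‖
          ≤ K * (c₀ * Cg) * (2 * π) * (r₂ * r₁⁻¹) * min1m := by
        rw [norm_mul, norm_mul, norm_mul, norm_mul, norm_mul, hcnorm, hEr, hwr, h2π,
          Complex.norm_real, Real.norm_eq_abs, _root_.abs_of_nonneg hp0.le]
        have hΨ0 : 0 ≤ ‖Ψ ζ‖ := norm_nonneg _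
        have step1 : Real.exp (-(π * m * z.re)) *
            (c₀ * ‖Ψ ζ‖ * (Real.exp (-(2 * π * z.re)) * (2 * π) * p))
            ≤ K * (c₀ * (Cg * min 1 ((r₁ * p)⁻¹ ^ (m + 2))) * (r₂ * (2 * π) * p)) := by
          apply mul_le_mul hEK _ _ hK0.le
          · apply mul_le_mul (mul_le_mul_of_nonneg_left keyp hc₀0) _ _
              (mul_nonneg hc₀0 (mul_nonneg hCg0 hmin20))
            · apply mul_le_mul_of_nonneg_right _ hp0.le
              exact mul_le_mul_of_nonneg_right hrle2 (by positivity)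
            · positivity
          · apply mul_nonneg (mul_nonneg hc₀0 hΨ0)
            positivity
        refine step1.trans ?_
        have step2 : K * (c₀ * (Cg * min 1 ((r₁ * p)⁻¹ ^ (m + 2))) * (r₂ * (2 * π) * p))
            = K * (c₀ * Cg) * (2 * π) * r₂ * (p * min 1 ((r₁ * p)⁻¹ ^ (m + 2))) := by ring
        rw [step2]
        have step3 : K * (c₀ * Cg) * (2 * π) * r₂ * (p * min 1 ((r₁ * p)⁻¹ ^ (m + 2)))
            ≤ K * (c₀ * Cg) * (2 * π) * r₂ * (r₁⁻¹ * min1m) := by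
          apply mul_le_mul_of_nonneg_left hpmin
          have h2r : (0:ℝ) < r₂ := hr₂0
          positivity
        refine step3.trans (le_of_eq (by ring))
      simp only [hF'def]
      rw [norm_mul, norm_mul, RCLike.norm_conj, norm_pow, Complex.norm_real,
        Real.norm_eq_abs, _root_.abs_of_nonneg hp0.le, ← hζdef]
      calc ‖G p‖ * ‖Complex.exp (-((π : ℂ) * m * z)) * (-((π : ℂ) * m)) * fhat ζ +
            Complex.exp (-((π : ℂ) * m * z)) *
              (c * Ψ ζ * (Complex.exp (-(2 * (π : ℂ) * z)) * (-(2 * (π : ℂ))) * p))‖ *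
            p ^ (m - 1)
          ≤ ‖G p‖ * ((K * (π * m) * (c₀ * Cf) + K * (c₀ * Cg) * (2 * π) * (r₂ * r₁⁻¹)) *
            min1m) * p ^ (m - 1) := by
            apply mul_le_mul_of_nonneg_right _ (pow_nonneg hp0.le _)
            apply mul_le_mul_of_nonneg_left _ (norm_nonneg _)
            refine (norm_add_le _ _).trans ?_
            refine (add_le_add bound1 bound2).trans (le_of_eq (by ring))
        _ = (K * (π * m) * (c₀ * Cf) + K * (c₀ * Cg) * (2 * π) * (r₂ * r₁⁻¹)) *
            (‖G p‖ * (min1m * p ^ (m - 1))) := by ring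
    · -- integrability of bound
      exact (dom_integrable m hm hr₁0 hGm hG2).const_mul _
    · -- differentiability in z
      rw [ae_restrict_iff' measurableSet_Ioi]
      filter_upwards with p hp
      intro z hz
      have hp0 : (0:ℝ) < p := hp
      have e1 : HasDerivAt (fun z : ℂ => Complex.exp (-((π : ℂ) * m * z)))
          (Complex.exp (-((π : ℂ) * m * z)) * (-((π : ℂ) * m))) z := by
        have h0 : HasDerivAt (fun z : ℂ => -((π : ℂ) * m) * z) (-((π : ℂ) * m)) z := by
          simpa using (hasDerivAt_id z).const_mul (-((π : ℂ) * m))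
        have := h0.cexp
        simp only [neg_mul] at this ⊢
        exact this
      have e2 : HasDerivAt (fun z : ℂ => Complex.exp (-(2 * (π : ℂ) * z)) * p)
          ((Complex.exp (-(2 * (π : ℂ) * z)) * (-(2 * (π : ℂ)))) * p) z := by
        have h0 : HasDerivAt (fun z : ℂ => -(2 * (π : ℂ)) * z) (-(2 * (π : ℂ))) z := by
          simpa using (hasDerivAt_id z).const_mul (-(2 * (π : ℂ)))
        have := (h0.cexp).mul_const (p : ℂ)
        simp only [neg_mul] at this ⊢
        exact this
      have e3 := (hfd (Complex.exp (-(2 * (π : ℂ) * z)) * p)).comp z e2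
      have e4 := e1.mul e3
      have e5 := (e4.const_mul ((starRingEnd ℂ) (G p))).mul_const ((p : ℂ) ^ (m - 1))
      simp only [Function.comp, Pi.mul_apply] at e5
      have hfun : (fun z : ℂ => (starRingEnd ℂ) (G p) *
          (Complex.exp (-((π : ℂ) * m * z)) *
            fhat (Complex.exp (-(2 * (π : ℂ) * z)) * p)) * (p : ℂ) ^ (m - 1))
          = (fun z : ℂ => (starRingEnd ℂ) (G p) * Complex.exp (-((π : ℂ) * m * z)) *
            fhat (Complex.exp (-(2 * (π : ℂ) * z)) * p) * (p : ℂ) ^ (m - 1)) := by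
        funext z
        ring
      rw [hfun] at e5
      exact e5
end

section
/- Fix an integer m ≥ 1. Let f, g : ℝ → ℂ be smooth functions with f(x + 2π) = (-1)^m f(x) and g(x + 2π) = (-1)^m g(x) for all x ∈ ℝ, and for k ∈ ℕ set f̂_{-k} := (2π)^{-1} ∫_{-π}^{π} f(x) e^{i(k + m/2)x} dx, similarly ĝ_{-k}. Then the series Σ_{k=0}^{∞} C(m+k-1, k) · conj(f̂_{-k}) · ĝ_{-k} converges absolutely and lim_{ε → 0⁺} (2π)^{-2} ∫_{-π}^{π} ∫_{-π}^{π} e^{i m (x-y)/2} · (e^{i(x-y)} - (1-ε))^{-m} · g(y) · conj(f(x)) dy dx = Σ_{k=0}^{∞} C(m+k-1, k) · conj(f̂_{-k}) · ĝ_{-k}, the limit being taken over ε ∈ (0, 1) and C(·,·) denoting the binomial coefficient. -/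
open MeasureTheory Real

noncomputable def twcoef (m : ℕ) (f : ℝ → ℂ) (k : ℕ) : ℂ :=
  ∫ x in (-π)..π, f x * Complex.exp (Complex.I * ((k : ℂ) + (m : ℂ) / 2) * x)

lemma norm_exp_lam (n m : ℕ) (t : ℝ) :
    ‖Complex.exp (Complex.I * ((n : ℂ) + (m : ℂ) / 2) * t)‖ = 1 := by
  rw [show Complex.I * ((n : ℂ) + (m : ℂ) / 2) * t
      = ((((n : ℝ) + (m : ℝ) / 2) * t : ℝ) : ℂ) * Complex.I by push_cast; ring]
  rw [Complex.norm_exp_ofReal_mul_I]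

lemma norm_exp_lam_neg (n m : ℕ) (t : ℝ) :
    ‖Complex.exp (-(Complex.I * ((n : ℂ) + (m : ℂ) / 2) * t))‖ = 1 := by
  rw [show -(Complex.I * ((n : ℂ) + (m : ℂ) / 2) * t)
      = ((-(((n : ℝ) + (m : ℝ) / 2) * t) : ℝ) : ℂ) * Complex.I by push_cast; ring]
  rw [Complex.norm_exp_ofReal_mul_I]

lemma tw_boundary {m : ℕ} {f : ℝ → ℂ}
    (hfper : ∀ x : ℝ, f (x + 2 * π) = (-1 : ℂ) ^ m * f x) (k : ℕ) :
    f π * Complex.exp (Complex.I * ((k : ℂ) + (m : ℂ) / 2) * (π : ℝ)) =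
    f (-π) * Complex.exp (Complex.I * ((k : ℂ) + (m : ℂ) / 2) * ((-π : ℝ) : ℂ)) := by
  have h1 : f π = (-1 : ℂ) ^ m * f (-π) := by
    have := hfper (-π); rwa [show -π + 2 * π = π by ring] at this
  have h2 : Complex.exp (Complex.I * ((k : ℂ) + (m : ℂ) / 2) * (π : ℝ))
      = (-1 : ℂ) ^ m * Complex.exp (Complex.I * ((k : ℂ) + (m : ℂ) / 2) * ((-π : ℝ) : ℂ)) := by
    have harg : Complex.I * ((k : ℂ) + (m : ℂ) / 2) * (π : ℝ)
        = (((k : ℤ) : ℂ) * (2 * (π : ℂ) * Complex.I) + (m : ℂ) * ((π : ℂ) * Complex.I))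
          + Complex.I * ((k : ℂ) + (m : ℂ) / 2) * ((-π : ℝ) : ℂ) := by push_cast; ring
    rw [harg, Complex.exp_add, Complex.exp_add, Complex.exp_int_mul_two_pi_mul_I, one_mul,
      Complex.exp_nat_mul, Complex.exp_pi_mul_I]
  rw [h1, h2, show ((-1 : ℂ) ^ m * f (-π)) * ((-1 : ℂ) ^ m
      * Complex.exp (Complex.I * ((k : ℂ) + (m : ℂ) / 2) * ((-π : ℝ) : ℂ)))
      = ((-1 : ℂ) ^ (m + m)) * (f (-π)
      * Complex.exp (Complex.I * ((k : ℂ) + (m : ℂ) / 2) * ((-π : ℝ) : ℂ))) by ring,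
    Even.neg_one_pow ⟨m, rfl⟩, one_mul]

lemma tw_ibp {m : ℕ} {f : ℝ → ℂ} (hf : ContDiff ℝ (⊤ : ℕ∞) f)
    (hfper : ∀ x : ℝ, f (x + 2 * π) = (-1 : ℂ) ^ m * f x) (k : ℕ) :
    twcoef m (deriv f) k = -(Complex.I * ((k : ℂ) + (m : ℂ) / 2)) * twcoef m f k := by
  set lam : ℂ := (k : ℂ) + (m : ℂ) / 2 with hlamdef
  have hdf : Differentiable ℝ f := hf.differentiable (by simp)
  have hcontd : Continuous (deriv f) := (contDiff_infty_iff_deriv.mp hf).2.continuous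
  have hEcont : Continuous fun x : ℝ => Complex.exp (Complex.I * lam * x) :=
    Complex.continuous_exp.comp (continuous_const.mul Complex.continuous_ofReal)
  have key : ∀ x ∈ Set.uIcc (-π) π,
      HasDerivAt (fun x : ℝ => f x * Complex.exp (Complex.I * lam * x))
        (deriv f x * Complex.exp (Complex.I * lam * x)
          + f x * (Complex.exp (Complex.I * lam * x) * (Complex.I * lam))) x := by
    intro x _
    have h1 : HasDerivAt f (deriv f x) x := (hdf x).hasDerivAt
    have h2 : HasDerivAt (fun x : ℝ => Complex.I * lam * (x : ℂ)) (Complex.I * lam) x := by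
      simpa using (Complex.ofRealCLM.hasDerivAt (x := x)).const_mul (Complex.I * lam)
    exact h1.mul h2.cexp
  have hint : IntervalIntegrable (fun x : ℝ => deriv f x * Complex.exp (Complex.I * lam * x)
      + f x * (Complex.exp (Complex.I * lam * x) * (Complex.I * lam))) volume (-π) π :=
    ((hcontd.mul hEcont).add
      ((hdf.continuous).mul (hEcont.mul continuous_const))).intervalIntegrable _ _
  have heq := intervalIntegral.integral_eq_sub_of_hasDerivAt key hint
  rw [tw_boundary hfper k, sub_self] at heq
  rw [intervalIntegral.integral_add (f := fun x => deriv f x * Complex.exp (Complex.I * lam * x))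
    (g := fun x => f x * (Complex.exp (Complex.I * lam * x) * (Complex.I * lam))) ((hcontd.mul hEcont).intervalIntegrable _ _)
    (((hdf.continuous).mul (hEcont.mul continuous_const)).intervalIntegrable _ _)] at heq
  have h3 : (∫ x in (-π)..π, f x * (Complex.exp (Complex.I * lam * x) * (Complex.I * lam)))
      = (∫ x in (-π)..π, f x * Complex.exp (Complex.I * lam * x)) * (Complex.I * lam) := by
    rw [← intervalIntegral.integral_mul_const]
    exact intervalIntegral.integral_congr fun x _ => by ring
  rw [h3] at heq
  simp only [twcoef]
  linear_combination heq
lemma tw_deriv_per {m : ℕ} {f : ℝ → ℂ} (hf : ContDiff ℝ (⊤ : ℕ∞) f)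
    (hfper : ∀ x : ℝ, f (x + 2 * π) = (-1 : ℂ) ^ m * f x) :
    ∀ x : ℝ, deriv f (x + 2 * π) = (-1 : ℂ) ^ m * deriv f x := by
  intro x
  have hfun : (fun y : ℝ => f (y + 2 * π)) = fun y => (-1 : ℂ) ^ m * f y := funext hfper
  calc deriv f (x + 2 * π) = deriv (fun y : ℝ => f (y + 2 * π)) x :=
        (deriv_comp_add_const f (2 * π) x).symm
    _ = deriv (fun y : ℝ => (-1 : ℂ) ^ m * f y) x := by rw [hfun]
    _ = (-1 : ℂ) ^ m * deriv f x :=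
        deriv_const_mul _ (hf.differentiable (by simp) x)

lemma tw_iter {m : ℕ} {f : ℝ → ℂ} (hf : ContDiff ℝ (⊤ : ℕ∞) f)
    (hfper : ∀ x : ℝ, f (x + 2 * π) = (-1 : ℂ) ^ m * f x) (n : ℕ) :
    ContDiff ℝ (⊤ : ℕ∞) (iteratedDeriv n f) ∧
    (∀ x : ℝ, iteratedDeriv n f (x + 2 * π) = (-1 : ℂ) ^ m * iteratedDeriv n f x) ∧
    ∀ k : ℕ, twcoef m (iteratedDeriv n f) k
      = (-(Complex.I * ((k : ℂ) + (m : ℂ) / 2))) ^ n * twcoef m f k := by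
  induction n with
  | zero =>
    refine ⟨by simpa [iteratedDeriv_zero] using hf, by simpa [iteratedDeriv_zero] using hfper, ?_⟩
    intro k; simp [iteratedDeriv_zero]
  | succ n ih =>
    obtain ⟨h1, h2, h3⟩ := ih
    have hper' := tw_deriv_per h1 h2
    refine ⟨?_, ?_, ?_⟩
    · rw [iteratedDeriv_succ]; exact (contDiff_infty_iff_deriv.mp h1).2
    · intro x; rw [iteratedDeriv_succ]; exact hper' x
    · intro k
      rw [iteratedDeriv_succ, tw_ibp h1 h2 k, h3 k, pow_succ]
      ring

lemma tw_decay {m : ℕ} {f : ℝ → ℂ} (hm : 1 ≤ m) (hf : ContDiff ℝ (⊤ : ℕ∞) f)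
    (hfper : ∀ x : ℝ, f (x + 2 * π) = (-1 : ℂ) ^ m * f x) :
    ∃ C : ℝ, 0 ≤ C ∧ ∀ k : ℕ, ‖twcoef m f k‖ ≤ C / ((k : ℝ) + 1) ^ (m + 1) := by
  obtain ⟨h1, h2, h3⟩ := tw_iter hf hfper (m + 1)
  obtain ⟨M, hM⟩ := (isCompact_Icc (a := -π) (b := π)).exists_bound_of_continuousOn
    ((h1.continuous).continuousOn)
  set M' : ℝ := max M 0 with hM'def
  have hM'0 : 0 ≤ M' := le_max_right _ _
  have hb : ∀ k : ℕ, ‖twcoef m (iteratedDeriv (m + 1) f) k‖ ≤ M' * (2 * π) := by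
    intro k
    have hle : ∀ x ∈ Set.uIoc (-π) π,
        ‖iteratedDeriv (m + 1) f x * Complex.exp (Complex.I * ((k : ℂ) + (m : ℂ) / 2) * x)‖
          ≤ M' := by
      intro x hx
      rw [norm_mul, norm_exp_lam, mul_one]
      have hx' : x ∈ Set.Icc (-π) π := by
        rw [Set.uIoc_of_le (by linarith [pi_pos])] at hx
        exact ⟨le_of_lt hx.1, hx.2⟩
      exact le_trans (hM x hx') (le_max_left _ _)
    have := intervalIntegral.norm_integral_le_of_norm_le_const hle
    rw [show |π - (-π)| = 2 * π by rw [abs_of_nonneg (by linarith [pi_pos])]; ring] at this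
    exact this
  refine ⟨M' * (2 * π) * 2 ^ (m + 1), by positivity, fun k => ?_⟩
  have hlamnorm : ‖-(Complex.I * ((k : ℂ) + (m : ℂ) / 2))‖ = (k : ℝ) + (m : ℝ) / 2 := by
    rw [norm_neg, show Complex.I * ((k : ℂ) + (m : ℂ) / 2)
        = ((((k : ℝ) + (m : ℝ) / 2) : ℝ) : ℂ) * Complex.I by push_cast; ring,
      norm_mul, Complex.norm_real, Complex.norm_I, mul_one,
      Real.norm_of_nonneg (by positivity)]
  have hnorm : ((k : ℝ) + (m : ℝ) / 2) ^ (m + 1) * ‖twcoef m f k‖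
      = ‖twcoef m (iteratedDeriv (m + 1) f) k‖ := by
    rw [h3 k, norm_mul, norm_pow, hlamnorm]
  have hm1 : (1 : ℝ) ≤ (m : ℝ) := by exact_mod_cast hm
  have h5 : ((k : ℝ) + 1) ^ (m + 1) ≤ 2 ^ (m + 1) * ((k : ℝ) + (m : ℝ) / 2) ^ (m + 1) := by
    rw [← mul_pow]
    apply pow_le_pow_left₀ (by positivity)
    linarith
  have hkey : ‖twcoef m f k‖ * ((k : ℝ) + 1) ^ (m + 1) ≤ M' * (2 * π) * 2 ^ (m + 1) := by
    calc ‖twcoef m f k‖ * ((k : ℝ) + 1) ^ (m + 1)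
        ≤ ‖twcoef m f k‖ * (2 ^ (m + 1) * ((k : ℝ) + (m : ℝ) / 2) ^ (m + 1)) :=
          mul_le_mul_of_nonneg_left h5 (norm_nonneg _)
      _ = 2 ^ (m + 1) * (((k : ℝ) + (m : ℝ) / 2) ^ (m + 1) * ‖twcoef m f k‖) := by ring
      _ = 2 ^ (m + 1) * ‖twcoef m (iteratedDeriv (m + 1) f) k‖ := by rw [hnorm]
      _ ≤ 2 ^ (m + 1) * (M' * (2 * π)) := mul_le_mul_of_nonneg_left (hb k) (by positivity)
      _ = M' * (2 * π) * 2 ^ (m + 1) := by ring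
  rw [le_div_iff₀ (by positivity)]
  exact hkey
noncomputable def twK (m : ℕ) (f g : ℝ → ℂ) (r : ℝ) (x y : ℝ) : ℂ :=
  Complex.exp (Complex.I * m * ((x : ℂ) - (y : ℂ)) / 2) *
    ((Complex.exp (Complex.I * ((x : ℂ) - (y : ℂ))) - (r : ℂ)) ^ m)⁻¹ * g y
      * (starRingEnd ℂ) (f x)

noncomputable def twF (m : ℕ) (f g : ℝ → ℂ) (r : ℝ) (n : ℕ) (x y : ℝ) : ℂ :=
  (((m + n - 1).choose n : ℂ) * (r : ℂ) ^ n
    * (Complex.exp (-(Complex.I * ((n : ℂ) + (m : ℂ) / 2) * x)) * (starRingEnd ℂ) (f x)))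
  * (Complex.exp (Complex.I * ((n : ℂ) + (m : ℂ) / 2) * y) * g y)

noncomputable def twu (m : ℕ) (f g : ℝ → ℂ) (r : ℝ) (n : ℕ) (x : ℝ) : ℂ :=
  (((m + n - 1).choose n : ℂ) * (r : ℂ) ^ n * twcoef m g n)
  * (Complex.exp (-(Complex.I * ((n : ℂ) + (m : ℂ) / 2) * x)) * (starRingEnd ℂ) (f x))

lemma tw_choose_eq {m : ℕ} (hm : 1 ≤ m) (n : ℕ) :
    (m + n - 1).choose n = (n + (m - 1)).choose (m - 1) := by
  rw [show m + n - 1 = n + (m - 1) by omega,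
    ← Nat.choose_symm (Nat.le_add_right n (m - 1)), show n + (m - 1) - n = m - 1 by omega]

lemma tw_hasSum_K {m : ℕ} (hm : 1 ≤ m) (f g : ℝ → ℂ) {r : ℝ} (hr0 : 0 ≤ r) (hr1 : r < 1)
    (x y : ℝ) : HasSum (fun n => twF m f g r n x y) (twK m f g r x y) := by
  set θ : ℂ := (x : ℂ) - (y : ℂ) with hθ
  set z : ℂ := (r : ℂ) * Complex.exp (-(Complex.I * θ)) with hzdef
  have hznorm : ‖z‖ < 1 := by
    rw [hzdef, norm_mul, show -(Complex.I * θ) = (((y - x : ℝ)) : ℂ) * Complex.I by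
        rw [hθ]; push_cast; ring,
      Complex.norm_exp_ofReal_mul_I, mul_one,
      Complex.norm_real, Real.norm_of_nonneg hr0]
    exact hr1
  have hs := hasSum_choose_mul_geometric_of_norm_lt_one (𝕜 := ℂ) (m - 1) hznorm
  rw [show m - 1 + 1 = m from by omega] at hs
  have hs2 := hs.mul_left
    (Complex.exp (-(Complex.I * m * θ / 2)) * g y * (starRingEnd ℂ) (f x))
  have hfeq : ∀ n : ℕ,
      (Complex.exp (-(Complex.I * m * θ / 2)) * g y * (starRingEnd ℂ) (f x))
        * ((((n + (m - 1)).choose (m - 1) : ℕ) : ℂ) * z ^ n) = twF m f g r n x y := by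
    intro n
    have e1 : Complex.exp (-(Complex.I * m * θ / 2)) * Complex.exp (-(Complex.I * θ)) ^ n
        = Complex.exp (-(Complex.I * ((n : ℂ) + (m : ℂ) / 2) * x))
          * Complex.exp (Complex.I * ((n : ℂ) + (m : ℂ) / 2) * y) := by
      rw [← Complex.exp_nat_mul, ← Complex.exp_add, ← Complex.exp_add]
      congr 1
      rw [hθ]; push_cast; ring
    simp only [twF, tw_choose_eq hm n, hzdef, mul_pow]
    linear_combination ((((n + (m - 1)).choose (m - 1) : ℕ) : ℂ) * (r : ℂ) ^ n * g y
      * (starRingEnd ℂ) (f x)) * e1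
  have h1z : (1 : ℂ) - z ≠ 0 := by
    intro h
    have hz1 : z = 1 := (sub_eq_zero.mp h).symm
    rw [hz1] at hznorm; simp at hznorm
  have hfac : Complex.exp (Complex.I * θ) - (r : ℂ) = Complex.exp (Complex.I * θ) * (1 - z) := by
    have hee : Complex.exp (Complex.I * θ) * Complex.exp (-(Complex.I * θ)) = 1 := by
      rw [← Complex.exp_add, add_neg_cancel, Complex.exp_zero]
    rw [hzdef]
    linear_combination (r : ℂ) * hee
  have e2 : Complex.exp (Complex.I * m * θ / 2) * Complex.exp (-((m : ℂ) * Complex.I * θ))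
      = Complex.exp (-(Complex.I * m * θ / 2)) := by
    rw [← Complex.exp_add]; congr 1; ring
  have hval : (Complex.exp (-(Complex.I * m * θ / 2)) * g y * (starRingEnd ℂ) (f x))
      * (1 / (1 - z) ^ m) = twK m f g r x y := by
    simp only [twK, ← hθ]
    rw [hfac, mul_pow, mul_inv, ← Complex.exp_nat_mul, ← Complex.exp_neg, one_div, ← e2]
    ring
  rw [funext hfeq, hval] at hs2
  exact hs2
lemma tw_integral_eq {m : ℕ} (hm : 1 ≤ m) {f g : ℝ → ℂ}
    (hfc : Continuous f) (hgc : Continuous g) {r : ℝ} (hr0 : 0 ≤ r) (hr1 : r < 1) :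
    (∫ x in (-π)..π, ∫ y in (-π)..π,
      Complex.exp (Complex.I * m * ((x : ℂ) - (y : ℂ)) / 2) *
        ((Complex.exp (Complex.I * ((x : ℂ) - (y : ℂ))) - (r : ℂ)) ^ m)⁻¹ * g y
          * (starRingEnd ℂ) (f x))
    = ∑' n : ℕ, ((m + n - 1).choose n : ℂ) * (r : ℂ) ^ n
        * (starRingEnd ℂ) (twcoef m f n) * twcoef m g n := by
  have hple : -π ≤ π := by linarith [pi_pos]
  have hμeq : ∀ h : ℝ → ℂ, (∫ y in (-π)..π, h y) = ∫ y in Set.Ioc (-π) π, h y :=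
    fun h => intervalIntegral.integral_of_le hple
  have hEy : ∀ n : ℕ, Continuous fun t : ℝ =>
      Complex.exp (Complex.I * ((n : ℂ) + (m : ℂ) / 2) * t) :=
    fun n => Complex.continuous_exp.comp (continuous_const.mul Complex.continuous_ofReal)
  have hEx : ∀ n : ℕ, Continuous fun t : ℝ =>
      Complex.exp (-(Complex.I * ((n : ℂ) + (m : ℂ) / 2) * t)) :=
    fun n => Complex.continuous_exp.comp (continuous_const.mul Complex.continuous_ofReal).neg
  have hconjf : Continuous fun t : ℝ => (starRingEnd ℂ) (f t) := Complex.continuous_conj.comp hfc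
  have hcoefsum : Summable (fun n : ℕ => ((m + n - 1).choose n : ℝ) * r ^ n) := by
    have hs := summable_choose_mul_geometric_of_norm_lt_one (R := ℝ) (m - 1)
      (r := r) (by rwa [Real.norm_eq_abs, abs_of_nonneg hr0])
    exact hs.congr fun n => by rw [← tw_choose_eq hm n]
  set Ig : ℝ := ∫ y in Set.Ioc (-π) π, ‖g y‖ with hIgdef
  set If : ℝ := ∫ y in Set.Ioc (-π) π, ‖f y‖ with hIfdef
  have hIg0 : 0 ≤ Ig := integral_nonneg fun y => norm_nonneg _
  have hIf0 : 0 ≤ If := integral_nonneg fun y => norm_nonneg _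
  have hFnorm : ∀ (n : ℕ) (x y : ℝ), ‖twF m f g r n x y‖
      = (((m + n - 1).choose n : ℝ) * r ^ n * ‖f x‖) * ‖g y‖ := by
    intro n x y
    simp only [twF, norm_mul, norm_pow, Complex.norm_natCast, Complex.norm_real,
      Real.norm_of_nonneg hr0, norm_exp_lam, norm_exp_lam_neg, RCLike.norm_conj, one_mul]
  have hFint : ∀ (n : ℕ) (x : ℝ),
      IntegrableOn (fun y => twF m f g r n x y) (Set.Ioc (-π) π) := by
    intro n x
    apply Continuous.integrableOn_Ioc
    exact continuous_const.mul ((hEy n).mul hgc)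
  have hsumy : ∀ x : ℝ, Summable fun n : ℕ => ∫ y in Set.Ioc (-π) π, ‖twF m f g r n x y‖ := by
    intro x
    have heq : ∀ n : ℕ, (∫ y in Set.Ioc (-π) π, ‖twF m f g r n x y‖)
        = (((m + n - 1).choose n : ℝ) * r ^ n) * (‖f x‖ * Ig) := by
      intro n
      simp_rw [hFnorm n x]
      rw [MeasureTheory.integral_const_mul]
      ring
    exact Summable.congr (hcoefsum.mul_right (‖f x‖ * Ig)) fun n => (heq n).symm
  have hinner : ∀ x : ℝ, HasSum (fun n => twu m f g r n x)
      (∫ y in Set.Ioc (-π) π, twK m f g r x y) := by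
    intro x
    have h := hasSum_integral_of_summable_integral_norm
      (μ := volume.restrict (Set.Ioc (-π) π)) (F := fun n y => twF m f g r n x y)
      (fun n => hFint n x) (hsumy x)
    have hval : (∫ y in Set.Ioc (-π) π, ∑' n : ℕ, twF m f g r n x y)
        = ∫ y in Set.Ioc (-π) π, twK m f g r x y :=
      integral_congr_ae (Filter.Eventually.of_forall fun y =>
        (tw_hasSum_K hm f g hr0 hr1 x y).tsum_eq)
    have hterm : ∀ n : ℕ, (∫ y in Set.Ioc (-π) π, twF m f g r n x y) = twu m f g r n x := by
      intro n
      simp only [twF]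
      rw [MeasureTheory.integral_const_mul]
      have hg2 : (∫ y in Set.Ioc (-π) π,
          Complex.exp (Complex.I * ((n : ℂ) + (m : ℂ) / 2) * y) * g y) = twcoef m g n := by
        rw [twcoef, hμeq]
        exact integral_congr_ae (Filter.Eventually.of_forall fun y => mul_comm _ _)
      rw [hg2]
      simp only [twu]
      ring
    rw [funext hterm, hval] at h
    exact h
  have hunorm : ∀ (n : ℕ) (x : ℝ), ‖twu m f g r n x‖
      = (((m + n - 1).choose n : ℝ) * r ^ n * ‖twcoef m g n‖) * ‖f x‖ := by
    intro n x
    simp only [twu, norm_mul, norm_pow, Complex.norm_natCast, Complex.norm_real,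
      Real.norm_of_nonneg hr0, norm_exp_lam_neg, RCLike.norm_conj, one_mul]
  have htwg_bd : ∀ n : ℕ, ‖twcoef m g n‖ ≤ Ig := by
    intro n
    rw [twcoef, hμeq]
    refine le_trans (norm_integral_le_integral_norm _) (le_of_eq ?_)
    refine integral_congr_ae (Filter.Eventually.of_forall fun y => ?_)
    dsimp only
    rw [norm_mul, norm_exp_lam, mul_one]
  have hu_int : ∀ n : ℕ, IntegrableOn (fun x => twu m f g r n x) (Set.Ioc (-π) π) := by
    intro n
    apply Continuous.integrableOn_Ioc
    exact continuous_const.mul ((hEx n).mul hconjf)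
  have hsumx : Summable fun n : ℕ => ∫ x in Set.Ioc (-π) π, ‖twu m f g r n x‖ := by
    refine Summable.of_nonneg_of_le (fun n => integral_nonneg fun x => norm_nonneg _)
      (fun n => ?_) (hcoefsum.mul_right (Ig * If))
    have heq : (∫ x in Set.Ioc (-π) π, ‖twu m f g r n x‖)
        = (((m + n - 1).choose n : ℝ) * r ^ n * ‖twcoef m g n‖) * If := by
      simp_rw [hunorm n]
      rw [MeasureTheory.integral_const_mul]
    rw [heq]
    have h0 : (0 : ℝ) ≤ ((m + n - 1).choose n : ℝ) * r ^ n := by positivity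
    calc (((m + n - 1).choose n : ℝ) * r ^ n * ‖twcoef m g n‖) * If
        ≤ (((m + n - 1).choose n : ℝ) * r ^ n * Ig) * If :=
          mul_le_mul_of_nonneg_right (mul_le_mul_of_nonneg_left (htwg_bd n) h0) hIf0
      _ = ((m + n - 1).choose n : ℝ) * r ^ n * (Ig * If) := by ring
  have houter := hasSum_integral_of_summable_integral_norm
    (μ := volume.restrict (Set.Ioc (-π) π)) (F := fun n x => twu m f g r n x)
    (fun n => hu_int n) hsumx
  have hconj : ∀ n : ℕ, (∫ x in Set.Ioc (-π) π,
      Complex.exp (-(Complex.I * ((n : ℂ) + (m : ℂ) / 2) * x)) * (starRingEnd ℂ) (f x))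
      = (starRingEnd ℂ) (twcoef m f n) := by
    intro n
    rw [twcoef, hμeq, ← integral_conj]
    refine integral_congr_ae (Filter.Eventually.of_forall fun x => ?_)
    dsimp only
    have harg : (starRingEnd ℂ) (Complex.I * ((n : ℂ) + (m : ℂ) / 2) * (x : ℂ))
        = -(Complex.I * ((n : ℂ) + (m : ℂ) / 2) * x) := by
      simp only [map_mul, map_add, map_div₀, Complex.conj_I, Complex.conj_natCast,
        Complex.conj_ofReal, map_ofNat]
      ring
    rw [map_mul, ← Complex.exp_conj, harg, mul_comm]
  have hterm2 : ∀ n : ℕ, (∫ x in Set.Ioc (-π) π, twu m f g r n x)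
      = ((m + n - 1).choose n : ℂ) * (r : ℂ) ^ n
        * (starRingEnd ℂ) (twcoef m f n) * twcoef m g n := by
    intro n
    simp only [twu]
    rw [MeasureTheory.integral_const_mul, hconj n]
    ring
  calc (∫ x in (-π)..π, ∫ y in (-π)..π,
      Complex.exp (Complex.I * m * ((x : ℂ) - (y : ℂ)) / 2) *
        ((Complex.exp (Complex.I * ((x : ℂ) - (y : ℂ))) - (r : ℂ)) ^ m)⁻¹ * g y
          * (starRingEnd ℂ) (f x))
      = ∫ x in Set.Ioc (-π) π, ∫ y in Set.Ioc (-π) π, twK m f g r x y := by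
        rw [hμeq]
        refine integral_congr_ae (Filter.Eventually.of_forall fun x => ?_)
        dsimp only
        rw [hμeq]
        rfl
    _ = ∫ x in Set.Ioc (-π) π, ∑' n : ℕ, twu m f g r n x := by
        refine integral_congr_ae (Filter.Eventually.of_forall fun x => ?_)
        exact ((hinner x).tsum_eq).symm
    _ = ∑' n : ℕ, ∫ x in Set.Ioc (-π) π, twu m f g r n x := by
        rw [← houter.tsum_eq]
    _ = ∑' n : ℕ, ((m + n - 1).choose n : ℂ) * (r : ℂ) ^ n
        * (starRingEnd ℂ) (twcoef m f n) * twcoef m g n := tsum_congr hterm2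
lemma tw_arith {P Q R S cf cg nf ng ch : ℝ} (hP : 0 < P) (hQ : 0 ≤ Q) (hcf : 0 ≤ cf)
    (hcg : 0 ≤ cg) (hS : 0 ≤ S) (hnf0 : 0 ≤ nf) (hng0 : 0 ≤ ng) (hch0 : 0 ≤ ch) (hR : 0 ≤ R)
    (hch : ch ≤ S * Q) (hnf : nf ≤ cf / P) (hng : ng ≤ cg / P)
    (hfrac : Q / (P * P) ≤ R) :
    ch * nf * ng ≤ S * cf * cg * R := by
  calc ch * nf * ng ≤ (S * Q) * (cf / P) * (cg / P) := by
        apply mul_le_mul _ hng hng0 (mul_nonneg (mul_nonneg hS hQ) (div_nonneg hcf hP.le))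
        exact mul_le_mul hch hnf hnf0 (mul_nonneg hS hQ)
    _ = (S * cf * cg) * (Q / (P * P)) := by ring
    _ ≤ (S * cf * cg) * R :=
        mul_le_mul_of_nonneg_left hfrac (mul_nonneg (mul_nonneg hS hcf) hcg)
    _ = S * cf * cg * R := rfl

theorem stmt3 (m : ℕ) (hm : 1 ≤ m) (f g : ℝ → ℂ)
    (hf : ContDiff ℝ (⊤ : ℕ∞) f) (hg : ContDiff ℝ (⊤ : ℕ∞) g)
    (hfper : ∀ x : ℝ, f (x + 2 * π) = (-1 : ℂ) ^ m * f x)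
    (hgper : ∀ x : ℝ, g (x + 2 * π) = (-1 : ℂ) ^ m * g x) :
    let fhat : ℕ → ℂ := fun k =>
      (2 * (π : ℂ))⁻¹ * ∫ x in (-π)..π, f x * Complex.exp (Complex.I * ((k : ℂ) + (m : ℂ) / 2) * x)
    let ghat : ℕ → ℂ := fun k =>
      (2 * (π : ℂ))⁻¹ * ∫ x in (-π)..π, g x * Complex.exp (Complex.I * ((k : ℂ) + (m : ℂ) / 2) * x)
    Summable (fun k : ℕ => ‖((m + k - 1).choose k : ℂ) * (starRingEnd ℂ) (fhat k) * ghat k‖) ∧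
    Filter.Tendsto (fun ε : ℝ =>
        ((2 * (π : ℂ)) ^ 2)⁻¹ * ∫ x in (-π)..π, ∫ y in (-π)..π,
          Complex.exp (Complex.I * m * ((x : ℂ) - (y : ℂ)) / 2) *
            ((Complex.exp (Complex.I * ((x : ℂ) - (y : ℂ))) - (1 - (ε : ℂ))) ^ m)⁻¹ *
              g y * (starRingEnd ℂ) (f x))
      (nhdsWithin 0 (Set.Ioo 0 1))
      (nhds (∑' k : ℕ, ((m + k - 1).choose k : ℂ) * (starRingEnd ℂ) (fhat k) * ghat k)) := by
  intro fhat ghat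
  have hfhat : ∀ k, fhat k = (2 * (π : ℂ))⁻¹ * twcoef m f k := fun k => rfl
  have hghat : ∀ k, ghat k = (2 * (π : ℂ))⁻¹ * twcoef m g k := fun k => rfl
  have hconj2pi : (starRingEnd ℂ) ((2 * (π : ℂ))⁻¹) = (2 * (π : ℂ))⁻¹ := by
    rw [map_inv₀, map_mul, Complex.conj_ofReal, map_ofNat]
  obtain ⟨Cf, hCf0, hCf⟩ := tw_decay hm hf hfper
  obtain ⟨Cg, hCg0, hCg⟩ := tw_decay hm hg hgper
  have hnorm2pi : ‖(2 * (π : ℂ))⁻¹‖ ≤ 1 := by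
    rw [norm_inv, show (2 * (π : ℂ)) = ((2 * π : ℝ) : ℂ) by push_cast; ring,
      Complex.norm_real, Real.norm_of_nonneg (by positivity)]
    rw [inv_le_one_iff₀]
    right
    nlinarith [pi_gt_three]
  have habs : Summable (fun k : ℕ =>
      ‖((m + k - 1).choose k : ℂ) * (starRingEnd ℂ) (fhat k) * ghat k‖) := by
    have h2 : Summable (fun n : ℕ => 1 / ((n : ℝ)) ^ 2) :=
      Real.summable_one_div_nat_pow.mpr one_lt_two
    have h3 : Summable (fun n : ℕ => 1 / ((n : ℝ) + 1) ^ 2) := by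
      have := (summable_nat_add_iff 1).2 h2
      exact this.congr fun n => by push_cast; ring
    have hmaj : Summable (fun k : ℕ => ((m : ℝ)) ^ (m - 1) * Cf * Cg * (1 / ((k : ℝ) + 1) ^ 2)) :=
      h3.mul_left _
    refine Summable.of_nonneg_of_le (fun k => norm_nonneg _) (fun k => ?_) hmaj
    have hk1 : (1 : ℝ) ≤ (k : ℝ) + 1 := by
      have : (0 : ℝ) ≤ (k : ℝ) := Nat.cast_nonneg k
      linarith
    have hf1 : ‖fhat k‖ ≤ Cf / ((k : ℝ) + 1) ^ (m + 1) := by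
      rw [hfhat k, norm_mul]
      calc ‖(2 * (π : ℂ))⁻¹‖ * ‖twcoef m f k‖ ≤ 1 * (Cf / ((k : ℝ) + 1) ^ (m + 1)) :=
            mul_le_mul hnorm2pi (hCf k) (norm_nonneg _) zero_le_one
        _ = Cf / ((k : ℝ) + 1) ^ (m + 1) := one_mul _
    have hg1 : ‖ghat k‖ ≤ Cg / ((k : ℝ) + 1) ^ (m + 1) := by
      rw [hghat k, norm_mul]
      calc ‖(2 * (π : ℂ))⁻¹‖ * ‖twcoef m g k‖ ≤ 1 * (Cg / ((k : ℝ) + 1) ^ (m + 1)) :=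
            mul_le_mul hnorm2pi (hCg k) (norm_nonneg _) zero_le_one
        _ = Cg / ((k : ℝ) + 1) ^ (m + 1) := one_mul _
    have hchoosebd : ((m + k - 1).choose k : ℝ) ≤ (m : ℝ) ^ (m - 1) * ((k : ℝ) + 1) ^ (m - 1) := by
      have hkm : k + (m - 1) ≤ m * (k + 1) := by
        have h1 := Nat.le_mul_of_pos_left k (show 0 < m from hm)
        have h2 : m * (k + 1) = m * k + m := by ring
        omega
      have h1 : (m + k - 1).choose k ≤ (m * (k + 1)) ^ (m - 1) := by
        calc (m + k - 1).choose k = (k + (m - 1)).choose (m - 1) := tw_choose_eq hm k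
          _ ≤ (k + (m - 1)) ^ (m - 1) := Nat.choose_le_pow _ _
          _ ≤ (m * (k + 1)) ^ (m - 1) := Nat.pow_le_pow_left hkm _
      calc ((m + k - 1).choose k : ℝ) ≤ (((m * (k + 1)) ^ (m - 1) : ℕ) : ℝ) := by exact_mod_cast h1
        _ = (m : ℝ) ^ (m - 1) * ((k : ℝ) + 1) ^ (m - 1) := by push_cast [mul_pow]; ring
    rw [norm_mul, norm_mul, Complex.norm_natCast, RCLike.norm_conj]
    have hfrac : ((k : ℝ) + 1) ^ (m - 1) / (((k : ℝ) + 1) ^ (m + 1) * ((k : ℝ) + 1) ^ (m + 1))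
        ≤ 1 / ((k : ℝ) + 1) ^ 2 := by
      rw [div_le_div_iff₀ (by positivity) (by positivity), one_mul, ← pow_add, ← pow_add]
      exact pow_le_pow_right₀ hk1 (by omega)
    exact tw_arith (by positivity) (by positivity) hCf0 hCg0 (by positivity)
      (norm_nonneg _) (norm_nonneg _) (Nat.cast_nonneg _) (by positivity)
      hchoosebd hf1 hg1 hfrac
  refine ⟨habs, ?_⟩
  have heventual : (fun ε : ℝ => ∑' k : ℕ,
        (((m + k - 1).choose k : ℂ) * (starRingEnd ℂ) (fhat k) * ghat k)
          * (((1 - ε : ℝ) : ℂ)) ^ k)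
      =ᶠ[nhdsWithin 0 (Set.Ioo 0 1)] (fun ε : ℝ =>
        ((2 * (π : ℂ)) ^ 2)⁻¹ * ∫ x in (-π)..π, ∫ y in (-π)..π,
          Complex.exp (Complex.I * m * ((x : ℂ) - (y : ℂ)) / 2) *
            ((Complex.exp (Complex.I * ((x : ℂ) - (y : ℂ))) - (1 - (ε : ℂ))) ^ m)⁻¹ *
              g y * (starRingEnd ℂ) (f x)) := by
    filter_upwards [self_mem_nhdsWithin] with ε hε
    obtain ⟨hε0, hε1⟩ := hε
    have hr0 : (0 : ℝ) ≤ 1 - ε := by linarith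
    have hr1 : 1 - ε < 1 := by linarith
    have hcast : (1 : ℂ) - (ε : ℂ) = (((1 - ε : ℝ)) : ℂ) := by push_cast; ring
    simp only [hcast]
    rw [tw_integral_eq hm hf.continuous hg.continuous hr0 hr1, ← tsum_mul_left]
    refine tsum_congr fun n => ?_
    rw [hfhat n, hghat n, map_mul, hconj2pi]
    ring
  refine Filter.Tendsto.congr' heventual ?_
  apply tendsto_tsum_of_dominated_convergence
    (bound := fun k : ℕ => ‖((m + k - 1).choose k : ℂ) * (starRingEnd ℂ) (fhat k) * ghat k‖)
    habs
  · intro k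
    have hcont : Continuous fun ε : ℝ =>
        (((m + k - 1).choose k : ℂ) * (starRingEnd ℂ) (fhat k) * ghat k)
          * (((1 - ε : ℝ) : ℂ)) ^ k :=
      continuous_const.mul ((Complex.continuous_ofReal.comp
        (continuous_const.sub continuous_id)).pow k)
    have h0 := (hcont.tendsto 0).mono_left
      (nhdsWithin_le_nhds (s := Set.Ioo (0:ℝ) 1))
    simpa using h0
  · filter_upwards [self_mem_nhdsWithin] with ε hε k
    rw [norm_mul]
    have h1 : ‖(((1 - ε : ℝ)) : ℂ) ^ k‖ ≤ 1 := by
      rw [norm_pow, Complex.norm_real, Real.norm_of_nonneg (by linarith [hε.2])]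
      exact pow_le_one₀ (by linarith [hε.2]) (by linarith [hε.1])
    exact mul_le_of_le_one_right (norm_nonneg _) h1
end

section
/- Let f : ℝ → ℂ be smooth and compactly supported with supp f ⊆ (-∞, 0]. Define f̂(ζ) := (2π)^{-1/2} ∫_ℝ f(x) e^{-iζx} dx for ζ ∈ ℂ. Then f̂ is entire (holomorphic on all of ℂ), and for all k, m ∈ ℕ and every ζ ∈ ℂ with Im ζ ≥ 0, |ζ^{k} · f̂^{(m)}(ζ)| ≤ (2π)^{-1/2} ∫_ℝ |(d/dx)^{k} (x^{m} f(x))| dx, where f̂^{(m)} denotes the m-th complex derivative of f̂. -/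
open MeasureTheory Real Complex

noncomputable def Ee (ζ : ℂ) (x : ℝ) : ℂ := Complex.exp (-(Complex.I * ζ * x))

lemma Ee_cont (ζ : ℂ) : Continuous (Ee ζ) := by
  unfold Ee; fun_prop

lemma Ee_norm (ζ : ℂ) (x : ℝ) : ‖Ee ζ x‖ = Real.exp (x * ζ.im) := by
  unfold Ee
  rw [Complex.norm_exp]
  congr 1
  simp [Complex.mul_re, Complex.mul_im]
  ring

lemma aux_int (h : ℝ → ℂ) (hc : Continuous h) (hs : HasCompactSupport h) (ζ : ℂ) :
    Integrable (fun x : ℝ => h x * Ee ζ x) := by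
  exact (hc.mul (Ee_cont ζ)).integrable_of_hasCompactSupport hs.mul_right

lemma Ee_hasDerivAt_x (ζ : ℂ) (x : ℝ) :
    HasDerivAt (fun y : ℝ => Ee ζ y) (-(Complex.I * ζ) * Ee ζ x) x := by
  have h1 : HasDerivAt (fun y : ℝ => (-(Complex.I * ζ)) * (y : ℂ)) (-(Complex.I * ζ)) x := by
    simpa using (Complex.ofRealCLM.hasDerivAt (x := x)).const_mul (-(Complex.I * ζ))
  have h2 := h1.cexp
  have e1 : (fun y : ℝ => Ee ζ y) = fun y : ℝ => Complex.exp (-(Complex.I * ζ) * (y : ℂ)) := by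
    funext y; unfold Ee; ring_nf
  have e2 : -(Complex.I * ζ) * Ee ζ x = Complex.exp (-(Complex.I * ζ) * (x : ℂ)) * -(Complex.I * ζ) := by
    unfold Ee; ring_nf
  rw [e1, e2]; exact h2

lemma Ee_hasDerivAt_z (ζ : ℂ) (x : ℝ) :
    HasDerivAt (fun z : ℂ => Ee z x) (-(Complex.I * x) * Ee ζ x) ζ := by
  have h1 : HasDerivAt (fun z : ℂ => (-(Complex.I * x)) * z) (-(Complex.I * x)) ζ := by
    simpa using (hasDerivAt_id ζ).const_mul (-(Complex.I * (x:ℂ)))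
  have h2 := h1.cexp
  have e1 : (fun z : ℂ => Ee z x) = fun z : ℂ => Complex.exp (-(Complex.I * x) * z) := by
    funext z; unfold Ee; ring_nf
  have e2 : -(Complex.I * x) * Ee ζ x = Complex.exp (-(Complex.I * x) * ζ) * -(Complex.I * x) := by
    unfold Ee; ring_nf
  rw [e1, e2]; exact h2

lemma aux_hasDerivAt (h : ℝ → ℂ) (hc : Continuous h) (hs : HasCompactSupport h) (ζ : ℂ) :
    HasDerivAt (fun z : ℂ => ∫ x : ℝ, h x * Ee z x)
      (∫ x : ℝ, -(Complex.I * x) * h x * Ee ζ x) ζ := by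
  set bound : ℝ → ℝ := fun x => ‖h x‖ * |x| * Real.exp (|x| * (‖ζ‖ + 1)) with hb
  have key := hasDerivAt_integral_of_dominated_loc_of_deriv_le (μ := volume)
    (F := fun (z : ℂ) (x : ℝ) => h x * Ee z x)
    (F' := fun (z : ℂ) (x : ℝ) => -(Complex.I * x) * h x * Ee z x)
    (x₀ := ζ) (bound := bound) (Metric.ball_mem_nhds ζ one_pos)
    ?_ ?_ ?_ ?_ ?_ ?_
  · convert key.2 using 1
  · filter_upwards with z
    exact ((hc.mul (Ee_cont z)).aestronglyMeasurable)
  · exact aux_int h hc hs ζ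
  · exact (Continuous.aestronglyMeasurable ((Continuous.mul (by fun_prop) hc).mul (by unfold Ee; fun_prop) : Continuous fun x : ℝ => -(Complex.I * x) * h x * Ee ζ x))
  · filter_upwards with x z hz
    rw [hb]
    have : ‖-(Complex.I * (x:ℂ)) * h x * Ee z x‖ = |x| * ‖h x‖ * Real.exp (x * z.im) := by
      rw [norm_mul, norm_mul, Ee_norm]
      simp
    rw [this]
    have h1 : Real.exp (x * z.im) ≤ Real.exp (|x| * (‖ζ‖ + 1)) := by
      apply Real.exp_le_exp.2
      calc x * z.im ≤ |x * z.im| := le_abs_self _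
        _ = |x| * |z.im| := abs_mul _ _
        _ ≤ |x| * (‖ζ‖ + 1) := by
            apply mul_le_mul_of_nonneg_left _ (abs_nonneg x)
            have : |z.im| ≤ ‖z‖ := Complex.abs_im_le_norm z
            have h2 : ‖z‖ ≤ ‖ζ‖ + 1 := by
              have := mem_ball_iff_norm.1 hz
              calc ‖z‖ = ‖ζ + (z - ζ)‖ := by ring_nf
                _ ≤ ‖ζ‖ + ‖z - ζ‖ := norm_add_le _ _
                _ ≤ ‖ζ‖ + 1 := by linarith
            linarith
    calc |x| * ‖h x‖ * Real.exp (x * z.im) ≤ |x| * ‖h x‖ * Real.exp (|x| * (‖ζ‖ + 1)) := by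
          apply mul_le_mul_of_nonneg_left h1 (by positivity)
      _ = ‖h x‖ * |x| * Real.exp (|x| * (‖ζ‖ + 1)) := by ring
  · apply Continuous.integrable_of_hasCompactSupport
    · fun_prop
    · apply HasCompactSupport.mul_right
      exact (hs.norm).mul_right
  · filter_upwards with x z hz
    exact ((Ee_hasDerivAt_z z x).const_mul (h x)).congr_deriv (by ring)

lemma aux_iter (m : ℕ) : ∀ (h : ℝ → ℂ), Continuous h → HasCompactSupport h →
    iteratedDeriv m (fun z : ℂ => ∫ x : ℝ, h x * Ee z x)
      = fun z : ℂ => ∫ x : ℝ, (-(Complex.I * x)) ^ m * h x * Ee z x := by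
  induction m with
  | zero => intro h hc hs; simp
  | succ m ih =>
    intro h hc hs
    rw [iteratedDeriv_succ']
    have hd : deriv (fun z : ℂ => ∫ x : ℝ, h x * Ee z x)
        = fun z : ℂ => ∫ x : ℝ, (-(Complex.I * x) * h x) * Ee z x := by
      funext z
      exact (aux_hasDerivAt h hc hs z).deriv
    rw [hd, ih (fun x => -(Complex.I * x) * h x) (by fun_prop) (hs.mul_left)]
    funext z
    congr 1
    funext x
    ring

lemma aux_ibp (h : ℝ → ℂ) (hd : ContDiff ℝ (⊤ : ℕ∞) h) (hs : HasCompactSupport h) (ζ : ℂ) :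
    ∫ x : ℝ, deriv h x * Ee ζ x = (Complex.I * ζ) * ∫ x : ℝ, h x * Ee ζ x := by
  have hdc : Continuous (deriv h) := hd.continuous_deriv (by exact_mod_cast le_top)
  set P : ℝ → ℂ := fun x => h x * Ee ζ x with hP
  have hPd : ∀ x : ℝ, HasDerivAt P (deriv h x * Ee ζ x + h x * (-(Complex.I * ζ) * Ee ζ x)) x := by
    intro x
    exact ((hd.differentiable (by simp)).differentiableAt.hasDerivAt).mul (Ee_hasDerivAt_x ζ x)
  have hPc : HasCompactSupport P := hs.mul_right
  have hint0 : ∫ x : ℝ, deriv P x = 0 := by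
    have hP1 : ContDiff ℝ 1 P := by
      apply ContDiff.mul (hd.of_le (by exact_mod_cast le_top))
      unfold Ee
      exact (Complex.contDiff_exp (𝕜 := ℝ) (n := 1)).comp
        ((contDiff_const.mul ((Complex.ofRealCLM : ℝ →L[ℝ] ℂ).contDiff)).neg)
    have hPi : Integrable (deriv P) :=
      (hP1.continuous_deriv le_rfl).integrable_of_hasCompactSupport hPc.deriv
    rw [← intervalIntegral.integral_Iic_add_Ioi (b := 0) hPi.integrableOn hPi.integrableOn]
    rw [HasCompactSupport.integral_Iic_deriv_eq hP1 hPc 0,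
      HasCompactSupport.integral_Ioi_deriv_eq hP1 hPc 0]
    ring
  have hderivP : deriv P = fun x => deriv h x * Ee ζ x + h x * (-(Complex.I * ζ) * Ee ζ x) := by
    funext x; exact (hPd x).deriv
  rw [hderivP] at hint0
  have hi1 : Integrable (fun x : ℝ => deriv h x * Ee ζ x) := aux_int _ hdc hs.deriv ζ
  have hi2 : Integrable (fun x : ℝ => h x * (-(Complex.I * ζ) * Ee ζ x)) := by
    have := (aux_int h (hd.continuous) hs ζ).const_mul (-(Complex.I * ζ))
    apply this.congr
    filter_upwards with x; ring
  rw [integral_add hi1 hi2] at hint0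
  have : ∫ x : ℝ, h x * (-(Complex.I * ζ) * Ee ζ x)
      = -(Complex.I * ζ) * ∫ x : ℝ, h x * Ee ζ x := by
    rw [← integral_const_mul]
    congr 1; funext x; ring
  rw [this] at hint0
  linear_combination hint0

lemma tsupport_iteratedDeriv_subset (g : ℝ → ℂ) (k : ℕ) :
    tsupport (iteratedDeriv k g) ⊆ tsupport g := by
  induction k with
  | zero => simp [iteratedDeriv_zero]
  | succ k ih =>
    rw [iteratedDeriv_succ]
    refine subset_trans ?_ ih
    exact closure_minimal (subset_trans support_deriv_subset subset_rfl) isClosed_closure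

lemma hcs_iteratedDeriv (g : ℝ → ℂ) (hs : HasCompactSupport g) (k : ℕ) :
    HasCompactSupport (iteratedDeriv k g) :=
  by
  unfold HasCompactSupport at hs ⊢
  exact IsCompact.of_isClosed_subset hs isClosed_closure (tsupport_iteratedDeriv_subset g k)

lemma smooth_iteratedDeriv (g : ℝ → ℂ) (hg : ContDiff ℝ (⊤ : ℕ∞) g) (k : ℕ) :
    ContDiff ℝ (⊤ : ℕ∞) (iteratedDeriv k g) := by
  rw [iteratedDeriv_eq_iterate]
  exact ContDiff.iterate_deriv k hg

lemma aux_ibpk (k : ℕ) (h : ℝ → ℂ) (hd : ContDiff ℝ (⊤ : ℕ∞) h) (hs : HasCompactSupport h)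
    (ζ : ℂ) :
    (Complex.I * ζ) ^ k * ∫ x : ℝ, h x * Ee ζ x = ∫ x : ℝ, iteratedDeriv k h x * Ee ζ x := by
  induction k with
  | zero => simp
  | succ k ih =>
    have := aux_ibp (iteratedDeriv k h) (smooth_iteratedDeriv h hd k)
      (hcs_iteratedDeriv h hs k) ζ
    rw [pow_succ, mul_comm ((Complex.I * ζ) ^ k) (Complex.I * ζ), mul_assoc, ih, ← this,
      iteratedDeriv_succ]

lemma aux_bound (h : ℝ → ℂ) (hc : Continuous h) (hs : HasCompactSupport h)
    (hsupp : tsupport h ⊆ Set.Iic 0) (ζ : ℂ) (him : 0 ≤ ζ.im) :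
    ‖∫ x : ℝ, h x * Ee ζ x‖ ≤ ∫ x : ℝ, ‖h x‖ := by
  apply norm_integral_le_of_norm_le (hc.norm.integrable_of_hasCompactSupport hs.norm)
  filter_upwards with x
  rw [norm_mul, Ee_norm]
  by_cases hx : h x = 0
  · simp [hx]
  · have hx0 : x ≤ 0 := hsupp (subset_tsupport h (by simpa using hx))
    have h1 : Real.exp (x * ζ.im) ≤ 1 := Real.exp_le_one_iff.2 (mul_nonpos_of_nonpos_of_nonneg hx0 him)
    nlinarith [norm_nonneg (h x)]

lemma iteratedDeriv_cmul (c : ℂ) (g : ℝ → ℂ) (k : ℕ) (hg : ContDiff ℝ (⊤ : ℕ∞) g) (x : ℝ) :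
    iteratedDeriv k (fun y => c * g y) x = c * iteratedDeriv k g x := by
  have h1 : (fun y => c * g y) = c • g := by funext y; simp [smul_eq_mul]
  rw [h1, iteratedDeriv_eq_iteratedFDeriv, iteratedDeriv_eq_iteratedFDeriv,
    iteratedFDeriv_const_smul_apply (hg.of_le (by exact_mod_cast le_top)).contDiffAt]
  simp

theorem stmt6 (f : ℝ → ℂ) (hf : ContDiff ℝ (⊤ : ℕ∞) f) (hfc : HasCompactSupport f)
    (hsupp : tsupport f ⊆ Set.Iic 0) :
    let fhat : ℂ → ℂ := fun ζ =>
      ((Real.sqrt (2 * π) : ℝ) : ℂ)⁻¹ * ∫ x : ℝ, f x * Complex.exp (-(Complex.I * ζ * x))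
    Differentiable ℂ fhat ∧
    ∀ k m : ℕ, ∀ ζ : ℂ, 0 ≤ ζ.im →
      ‖ζ ^ k * iteratedDeriv m fhat ζ‖ ≤
        (Real.sqrt (2 * π))⁻¹ * ∫ x : ℝ, ‖iteratedDeriv k (fun y : ℝ => (y : ℂ) ^ m * f y) x‖ := by
  intro fhat
  set c : ℂ := ((Real.sqrt (2 * π) : ℝ) : ℂ)⁻¹ with hc
  have hcnorm : ‖c‖ = (Real.sqrt (2 * π))⁻¹ := by
    rw [hc, norm_inv, Complex.norm_real, Real.norm_eq_abs, _root_.abs_of_nonneg (Real.sqrt_nonneg _)]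
  set g : ℝ → ℂ := fun x => c * f x with hg
  have hgsmooth : ContDiff ℝ (⊤ : ℕ∞) g := contDiff_const.mul hf
  have hgc : Continuous g := hgsmooth.continuous
  have hgs : HasCompactSupport g := hfc.mul_left
  have hgsupp : tsupport g ⊆ Set.Iic 0 :=
    subset_trans (closure_mono (Function.support_mul_subset_right _ _)) hsupp
  have hfhat : fhat = fun z => ∫ x : ℝ, g x * Ee z x := by
    funext z
    show c * ∫ x : ℝ, f x * Complex.exp (-(Complex.I * z * x)) = _
    rw [← integral_const_mul]
    congr 1; funext x; unfold Ee; ring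
  constructor
  · intro z
    rw [hfhat]
    exact (aux_hasDerivAt g hgc hgs z).differentiableAt
  · intro k m ζ him
    set p : ℝ → ℂ := fun y : ℝ => (y : ℂ) ^ m * f y with hp
    set q : ℝ → ℂ := fun y : ℝ => (y : ℂ) ^ m * g y with hq
    have hmono : ContDiff ℝ (⊤ : ℕ∞) fun y : ℝ => (y : ℂ) ^ m :=
      (Complex.ofRealCLM : ℝ →L[ℝ] ℂ).contDiff.pow m
    have hpsmooth : ContDiff ℝ (⊤ : ℕ∞) p := hmono.mul hf
    have hqsmooth : ContDiff ℝ (⊤ : ℕ∞) q := hmono.mul hgsmooth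
    have hqs : HasCompactSupport q := hgs.mul_left
    have hqsupp : tsupport q ⊆ Set.Iic 0 :=
      subset_trans (closure_mono (Function.support_mul_subset_right _ _)) hgsupp
    have hqp : q = fun y => c * p y := by funext y; rw [hq, hp, hg]; ring_nf
    rw [hfhat, aux_iter m g hgc hgs]
    have step1 : ∫ x : ℝ, (-(Complex.I * x)) ^ m * g x * Ee ζ x
        = (-Complex.I) ^ m * ∫ x : ℝ, q x * Ee ζ x := by
      rw [← integral_const_mul]
      congr 1; funext x
      have hx : (-(Complex.I * (x : ℂ))) ^ m = (-Complex.I) ^ m * (x : ℂ) ^ m := by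
        rw [show -(Complex.I * (x : ℂ)) = (-Complex.I) * x by ring, mul_pow]
      rw [hx, hq]; ring
    beta_reduce
    rw [step1]
    have key : ‖ζ ^ k * ((-Complex.I) ^ m * ∫ x : ℝ, q x * Ee ζ x)‖
        = ‖∫ x : ℝ, iteratedDeriv k q x * Ee ζ x‖ := by
      rw [← aux_ibpk k q hqsmooth hqs ζ]
      simp [norm_mul, norm_pow]
    rw [key]
    have hbd := aux_bound (iteratedDeriv k q) (smooth_iteratedDeriv q hqsmooth k).continuous
      (hcs_iteratedDeriv q hqs k) ((tsupport_iteratedDeriv_subset q k).trans hqsupp) ζ him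
    refine hbd.trans ?_
    have : ∀ x : ℝ, ‖iteratedDeriv k q x‖ = (Real.sqrt (2 * π))⁻¹ * ‖iteratedDeriv k p x‖ := by
      intro x
      rw [hqp, iteratedDeriv_cmul c p k hpsmooth x, norm_mul, hcnorm]
    simp_rw [this]
    rw [integral_const_mul]
end

section
/- Let V be a complex inner product space (inner product linear in the second variable) and let L₋₁, L₀, L₁ : V → V be linear maps satisfying L₁∘L₋₁ - L₋₁∘L₁ = 2·L₀, L₀∘L₋₁ - L₋₁∘L₀ = L₋₁, and ⟨L₁ x, y⟩ = ⟨x, L₋₁ y⟩ for all x, y ∈ V. Let a ∈ V and d ∈ ℝ satisfy L₀ a = d·a and L₁ a = 0. Then for every n ∈ ℕ: ⟨L₋₁ⁿ a, L₋₁ⁿ a⟩ = n! · (∏_{j=0}^{n-1} (2d + j)) · ⟨a, a⟩. Equivalently, when 2d is a nonnegative integer, ‖(1/n!)·L₋₁ⁿ a‖² = C(2d + n - 1, n)·‖a‖² with the binomial coefficient C. -/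
lemma my_prod_asc (M n : ℕ) : ∏ j ∈ Finset.range n, (M + j) = M.ascFactorial n := by
  induction n with
  | zero => simp
  | succ k ih => rw [Finset.prod_range_succ, ih, Nat.ascFactorial_succ, Nat.mul_comm]

theorem stmt10 {V : Type*} [NormedAddCommGroup V] [InnerProductSpace ℂ V]
    (Lm1 L0 L1 : Module.End ℂ V)
    (hcomm1 : ∀ x : V, L1 (Lm1 x) - Lm1 (L1 x) = (2 : ℂ) • L0 x)
    (hcomm2 : ∀ x : V, L0 (Lm1 x) - Lm1 (L0 x) = Lm1 x)
    (hadj : ∀ x y : V, (inner ℂ (L1 x) y : ℂ) = inner ℂ x (Lm1 y))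
    (a : V) (d : ℝ) (ha0 : L0 a = (d : ℂ) • a) (ha1 : L1 a = 0) :
    (∀ n : ℕ, (inner ℂ ((Lm1 ^ n) a) ((Lm1 ^ n) a) : ℂ) =
      (Nat.factorial n : ℂ) * (∏ j ∈ Finset.range n, ((2 * d + (j : ℝ) : ℝ) : ℂ)) *
        (inner ℂ a a : ℂ)) ∧
    (∀ M : ℕ, 2 * d = (M : ℝ) → ∀ n : ℕ,
      ‖((Nat.factorial n : ℂ))⁻¹ • (Lm1 ^ n) a‖ ^ 2 = ((M + n - 1).choose n : ℝ) * ‖a‖ ^ 2) := by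
  have hpow : ∀ n : ℕ, (Lm1 ^ (n + 1)) a = Lm1 ((Lm1 ^ n) a) := by
    intro n; rw [pow_succ']; rfl
  have key0 : ∀ n : ℕ, L0 ((Lm1 ^ n) a) = ((d : ℂ) + n) • (Lm1 ^ n) a := by
    intro n
    induction n with
    | zero => simpa using ha0
    | succ k ih =>
      have h := hcomm2 ((Lm1 ^ k) a)
      rw [sub_eq_iff_eq_add] at h
      rw [hpow, h, ih, map_smul]
      push_cast
      module
  have key1 : ∀ n : ℕ, L1 ((Lm1 ^ (n + 1)) a) =
      (((n : ℂ) + 1) * (2 * d + n)) • (Lm1 ^ n) a := by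
    intro n
    induction n with
    | zero =>
      have h := hcomm1 a
      rw [sub_eq_iff_eq_add] at h
      rw [hpow]
      simp only [pow_zero, Module.End.one_apply]
      rw [h, ha1, map_zero, add_zero, ha0]
      push_cast
      module
    | succ k ih =>
      have h := hcomm1 ((Lm1 ^ (k + 1)) a)
      rw [sub_eq_iff_eq_add] at h
      rw [hpow, h, ih, map_smul, key0 (k + 1), smul_smul, ← hpow]
      push_cast
      module
  have main : ∀ n : ℕ, (inner ℂ ((Lm1 ^ n) a) ((Lm1 ^ n) a) : ℂ) =
      (Nat.factorial n : ℂ) * (∏ j ∈ Finset.range n, ((2 * d + (j : ℝ) : ℝ) : ℂ)) *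
        (inner ℂ a a : ℂ) := by
    intro n
    induction n with
    | zero => simp
    | succ k ih =>
      have step : (inner ℂ ((Lm1 ^ (k + 1)) a) ((Lm1 ^ (k + 1)) a) : ℂ) =
          (((k : ℂ) + 1) * (2 * d + k)) * inner ℂ ((Lm1 ^ k) a) ((Lm1 ^ k) a) := by
        rw [hpow, ← hadj, ← hpow, key1 k, inner_smul_left]
        have hc : (starRingEnd ℂ) (((k : ℂ) + 1) * (2 * (d : ℂ) + (k : ℂ))) =
            ((k : ℂ) + 1) * (2 * (d : ℂ) + (k : ℂ)) := by
          simp [map_mul, map_add, Complex.conj_ofReal, Complex.conj_natCast,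
            Complex.conj_ofNat]
        rw [hc]
      rw [step, ih, Nat.factorial_succ, Finset.prod_range_succ]
      push_cast
      ring
  refine ⟨main, ?_⟩
  intro M h2d n
  have hprodR : (∏ j ∈ Finset.range n, (2 * d + (j : ℝ))) = (M.ascFactorial n : ℝ) := by
    simp only [h2d, ← my_prod_asc M n]
    push_cast
    rfl
  have hxr : ‖(Lm1 ^ n) a‖ ^ 2 = (Nat.factorial n : ℝ) * (M.ascFactorial n : ℝ) * ‖a‖ ^ 2 := by
    have h1 := main n
    rw [inner_self_eq_norm_sq_to_K ((Lm1 ^ n) a), inner_self_eq_norm_sq_to_K a] at h1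
    have hprod : (∏ j ∈ Finset.range n, ((2 * d + (j : ℝ) : ℝ) : ℂ)) =
        ((M.ascFactorial n : ℝ) : ℂ) := by
      rw [← hprodR]
      push_cast
      rfl
    rw [hprod] at h1
    have h2 : ((‖(Lm1 ^ n) a‖ ^ 2 : ℝ) : ℂ) =
        (((Nat.factorial n : ℝ) * (M.ascFactorial n : ℝ) * ‖a‖ ^ 2 : ℝ) : ℂ) := by
      push_cast at h1 ⊢
      exact h1
    exact Complex.ofReal_injective h2
  have hfac : (0 : ℝ) < (Nat.factorial n : ℝ) := by positivity
  rw [norm_smul, mul_pow, hxr]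
  have hnorm : ‖((Nat.factorial n : ℂ))⁻¹‖ = ((Nat.factorial n : ℝ))⁻¹ := by
    rw [norm_inv]
    norm_num
  rw [hnorm, Nat.ascFactorial_eq_factorial_mul_choose']
  push_cast
  field_simp
end

section
/- Let V be a complex inner product space (inner product linear in the second variable) and let L₋₁, L₀, L₁ : V → V be linear maps satisfying L₁∘L₋₁ - L₋₁∘L₁ = 2·L₀, L₀∘L₋₁ - L₋₁∘L₀ = L₋₁, and ⟨L₁ x, y⟩ = ⟨x, L₋₁ y⟩ for all x, y ∈ V. Let a ∈ V and d ∈ ℝ with d ≥ 0 satisfy L₀ a = d·a and L₁ a = 0. If c : ℕ → ℂ is rapidly decreasing, i.e. for every s ∈ ℕ the series Σ_{n=0}^{∞} (n+1)^{s} |c_n| converges, then Σ_{n=0}^{∞} (|c_n| / n!) · ‖L₋₁ⁿ a‖ < ∞; consequently the sequence of partial sums N ↦ Σ_{n<N} (c_n / n!) · L₋₁ⁿ a is a Cauchy sequence in V. -/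
open scoped ComplexConjugate

private lemma aux_nat (m n : ℕ) : (n + m) * (n + 1) ^ m ≤ (n + 1) * (n + 2) ^ m := by
  induction m with
  | zero => simp
  | succ m ih =>
    have h2 : (n + 1) ^ m ≤ (n + 2) ^ m := Nat.pow_le_pow_left (by omega) m
    calc (n + (m + 1)) * (n + 1) ^ (m + 1)
        = (n + m) * (n + 1) ^ m * (n + 1) + (n + 1) * (n + 1) ^ m := by ring
      _ ≤ (n + 1) * (n + 2) ^ m * (n + 1) + (n + 1) * (n + 2) ^ m :=
          Nat.add_le_add (Nat.mul_le_mul_right _ ih) (Nat.mul_le_mul_left _ h2)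
      _ = (n + 1) * (n + 2) ^ (m + 1) := by ring

theorem stmt12 {V : Type*} [NormedAddCommGroup V] [InnerProductSpace ℂ V]
    (Lm1 L0 L1 : Module.End ℂ V)
    (hcomm1 : ∀ x : V, L1 (Lm1 x) - Lm1 (L1 x) = (2 : ℂ) • L0 x)
    (hcomm2 : ∀ x : V, L0 (Lm1 x) - Lm1 (L0 x) = Lm1 x)
    (hadj : ∀ x y : V, (inner ℂ (L1 x) y : ℂ) = inner ℂ x (Lm1 y))
    (a : V) (d : ℝ) (hd : 0 ≤ d) (ha0 : L0 a = (d : ℂ) • a) (ha1 : L1 a = 0)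
    (c : ℕ → ℂ) (hc : ∀ s : ℕ, Summable fun n : ℕ => ((n : ℝ) + 1) ^ s * ‖c n‖) :
    (Summable fun n : ℕ => ‖c n‖ / (Nat.factorial n : ℝ) * ‖(Lm1 ^ n) a‖) ∧
    CauchySeq (fun N : ℕ => ∑ n ∈ Finset.range N, (c n / (Nat.factorial n : ℂ)) • (Lm1 ^ n) a) := by
  have hpow : ∀ n : ℕ, (Lm1 ^ (n + 1)) a = Lm1 ((Lm1 ^ n) a) := by
    intro n
    rw [pow_succ', Module.End.mul_apply]
  -- L0 eigenvalue on Lm1^n a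
  have hA : ∀ n : ℕ, L0 ((Lm1 ^ n) a) = ((d : ℂ) + n) • (Lm1 ^ n) a := by
    intro n
    induction n with
    | zero => simpa using ha0
    | succ n ih =>
      have h := hcomm2 ((Lm1 ^ n) a)
      have h' : L0 (Lm1 ((Lm1 ^ n) a)) = Lm1 (L0 ((Lm1 ^ n) a)) + Lm1 ((Lm1 ^ n) a) := by
        have := sub_eq_iff_eq_add.mp h
        linear_combination (norm := module) this
      rw [hpow n, h', ih, map_smul]
      push_cast
      module
  -- L1 action
  have hB : ∀ n : ℕ, L1 ((Lm1 ^ (n + 1)) a) =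
      (((n : ℂ) + 1) * (2 * (d : ℂ) + n)) • (Lm1 ^ n) a := by
    intro n
    induction n with
    | zero =>
      have h := hcomm1 a
      rw [ha1, ha0] at h
      simp only [map_zero, sub_zero, map_smul] at h
      rw [hpow 0]
      simp only [pow_zero, Module.End.one_apply]
      rw [h]
      push_cast
      module
    | succ n ih =>
      have h := hcomm1 ((Lm1 ^ (n + 1)) a)
      rw [ih, hA (n + 1)] at h
      have h2 : L1 (Lm1 ((Lm1 ^ (n + 1)) a)) =
          (((n : ℂ) + 1) * (2 * (d : ℂ) + n)) • Lm1 ((Lm1 ^ n) a)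
          + (2 : ℂ) • (((d : ℂ) + (n + 1)) • (Lm1 ^ (n + 1)) a) := by
        have := sub_eq_iff_eq_add.mp h
        rw [this, map_smul]
        push_cast
        module
      rw [hpow (n + 1), h2, hpow n]
      push_cast
      module
  -- norm recursion
  have hC : ∀ n : ℕ, ‖(Lm1 ^ (n + 1)) a‖ ^ 2 =
      ((n : ℝ) + 1) * (2 * d + n) * ‖(Lm1 ^ n) a‖ ^ 2 := by
    intro n
    have key : (inner ℂ ((Lm1 ^ (n + 1)) a) ((Lm1 ^ (n + 1)) a) : ℂ)
        = inner ℂ (L1 ((Lm1 ^ (n + 1)) a)) ((Lm1 ^ n) a) := by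
      rw [hadj]
      congr 1
      exact hpow n
    rw [hB n, inner_smul_left] at key
    have hs : (starRingEnd ℂ) (((n : ℂ) + 1) * (2 * (d : ℂ) + n))
        = ((((n : ℝ) + 1) * (2 * d + n) : ℝ) : ℂ) := by
      have : ((n : ℂ) + 1) * (2 * (d : ℂ) + n) = ((((n : ℝ) + 1) * (2 * d + n) : ℝ) : ℂ) := by
        push_cast
        ring
      rw [this, Complex.conj_ofReal]
    rw [hs] at key
    have h1 : ‖(Lm1 ^ (n + 1)) a‖ ^ 2
        = (inner ℂ ((Lm1 ^ (n + 1)) a) ((Lm1 ^ (n + 1)) a) : ℂ).re :=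
      by rw [show (Complex.re : ℂ → ℝ) = ⇑(RCLike.re (K := ℂ)) from rfl]
         exact (inner_self_eq_norm_sq _).symm
    have h2 : ‖(Lm1 ^ n) a‖ ^ 2 = (inner ℂ ((Lm1 ^ n) a) ((Lm1 ^ n) a) : ℂ).re := by
      rw [show (Complex.re : ℂ → ℝ) = ⇑(RCLike.re (K := ℂ)) from rfl]
      exact (inner_self_eq_norm_sq _).symm
    rw [h1, h2, key, Complex.re_ofReal_mul]
  -- the polynomial bound
  set m : ℕ := ⌈2 * d⌉₊ with hm
  have hdm : 2 * d ≤ (m : ℝ) := Nat.le_ceil _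
  have hD : ∀ n : ℕ, ‖(Lm1 ^ n) a‖ ^ 2 ≤
      ((Nat.factorial n : ℝ)) ^ 2 * ((n : ℝ) + 1) ^ m * ‖a‖ ^ 2 := by
    intro n
    induction n with
    | zero => simp
    | succ n ih =>
      have hfpos : (0 : ℝ) ≤ (Nat.factorial n : ℝ) ^ 2 * ‖a‖ ^ 2 := by positivity
      have haux : ((n : ℝ) + m) * ((n : ℝ) + 1) ^ m ≤ ((n : ℝ) + 1) * ((n : ℝ) + 2) ^ m := by
        exact_mod_cast aux_nat m n
      have hn1 : (0 : ℝ) ≤ (n : ℝ) + 1 := by positivity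
      have hle : ((n : ℝ) + 1) * (2 * d + n) ≤ ((n : ℝ) + 1) * ((m : ℝ) + n) := by
        have : 2 * d + n ≤ (m : ℝ) + n := by linarith
        exact mul_le_mul_of_nonneg_left this hn1
      have hcore : ((n : ℝ) + 1) * (((m : ℝ) + n) * ((n : ℝ) + 1) ^ m)
          ≤ ((n : ℝ) + 1) * (((n : ℝ) + 1) * ((n : ℝ) + 2) ^ m) := by
        refine mul_le_mul_of_nonneg_left ?_ hn1
        have : ((m : ℝ) + n) * ((n : ℝ) + 1) ^ m = ((n : ℝ) + m) * ((n : ℝ) + 1) ^ m := by ring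
        rw [this]
        exact haux
      calc ‖(Lm1 ^ (n + 1)) a‖ ^ 2
          = ((n : ℝ) + 1) * (2 * d + n) * ‖(Lm1 ^ n) a‖ ^ 2 := hC n
        _ ≤ ((n : ℝ) + 1) * ((m : ℝ) + n) *
              ((Nat.factorial n : ℝ) ^ 2 * ((n : ℝ) + 1) ^ m * ‖a‖ ^ 2) := by
            refine mul_le_mul hle ih (sq_nonneg _) ?_
            positivity
        _ = ((Nat.factorial n : ℝ) ^ 2 * ‖a‖ ^ 2) *
              (((n : ℝ) + 1) * (((m : ℝ) + n) * ((n : ℝ) + 1) ^ m)) := by ring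
        _ ≤ ((Nat.factorial n : ℝ) ^ 2 * ‖a‖ ^ 2) *
              (((n : ℝ) + 1) * (((n : ℝ) + 1) * ((n : ℝ) + 2) ^ m)) :=
            mul_le_mul_of_nonneg_left hcore hfpos
        _ = ((Nat.factorial (n + 1) : ℝ)) ^ 2 * (((n + 1 : ℕ) : ℝ) + 1) ^ m * ‖a‖ ^ 2 := by
            rw [Nat.factorial_succ]
            push_cast
            ring
  have hE : ∀ n : ℕ, ‖(Lm1 ^ n) a‖ ≤ (Nat.factorial n : ℝ) * ((n : ℝ) + 1) ^ m * ‖a‖ := by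
    intro n
    have h1 : (1 : ℝ) ≤ ((n : ℝ) + 1) ^ m := one_le_pow₀ (by have := Nat.cast_nonneg (α := ℝ) n; linarith)
    have hR : (0 : ℝ) ≤ (Nat.factorial n : ℝ) * ((n : ℝ) + 1) ^ m * ‖a‖ := by positivity
    have hsq : ‖(Lm1 ^ n) a‖ ^ 2 ≤ ((Nat.factorial n : ℝ) * ((n : ℝ) + 1) ^ m * ‖a‖) ^ 2 := by
      refine (hD n).trans ?_
      have hp : (0 : ℝ) ≤ ((n : ℝ) + 1) ^ m := by positivity
      nlinarith [sq_nonneg ‖a‖, sq_nonneg ((Nat.factorial n : ℝ)),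
        mul_nonneg (mul_nonneg (sq_nonneg ((Nat.factorial n : ℝ))) hp) (sq_nonneg ‖a‖)]
    calc ‖(Lm1 ^ n) a‖ = Real.sqrt (‖(Lm1 ^ n) a‖ ^ 2) := (Real.sqrt_sq (norm_nonneg _)).symm
      _ ≤ Real.sqrt (((Nat.factorial n : ℝ) * ((n : ℝ) + 1) ^ m * ‖a‖) ^ 2) :=
          Real.sqrt_le_sqrt hsq
      _ = (Nat.factorial n : ℝ) * ((n : ℝ) + 1) ^ m * ‖a‖ := Real.sqrt_sq hR
  have hbound : ∀ n : ℕ, ‖c n‖ / (Nat.factorial n : ℝ) * ‖(Lm1 ^ n) a‖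
      ≤ ‖a‖ * (((n : ℝ) + 1) ^ m * ‖c n‖) := by
    intro n
    have hfac : (0 : ℝ) < (Nat.factorial n : ℝ) := by positivity
    have h2 : ‖c n‖ / (Nat.factorial n : ℝ) * ‖(Lm1 ^ n) a‖
        ≤ ‖c n‖ / (Nat.factorial n : ℝ) * ((Nat.factorial n : ℝ) * ((n : ℝ) + 1) ^ m * ‖a‖) :=
      mul_le_mul_of_nonneg_left (hE n) (by positivity)
    refine h2.trans_eq ?_
    field_simp
  have hsumg : Summable fun n : ℕ => ‖a‖ * (((n : ℝ) + 1) ^ m * ‖c n‖) := (hc m).mul_left _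
  have hsum : Summable fun n : ℕ => ‖c n‖ / (Nat.factorial n : ℝ) * ‖(Lm1 ^ n) a‖ :=
    Summable.of_nonneg_of_le (fun n => by positivity) hbound hsumg
  refine ⟨hsum, ?_⟩
  refine cauchySeq_range_of_norm_bounded (hsum.hasSum.tendsto_sum_nat.cauchySeq) ?_
  intro n
  rw [norm_smul, norm_div, Complex.norm_natCast]
end
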